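/- arXiv:1701.06632 — 3 statements merged into one kernel-verified Lean document; each statement's English description precedes it below -/
import Mathlib

section
/- For every choice of integers d, Q ≥ 1 and r ≥ 0, the rooted d-tree T_r is balanced, has exactly dQ + r facets and exactly r vertex roots, and its min-density equals mindens(T_r) = 2^d + (r/(dQ))·(2^d − 1). -/
/-- The block `σ_i = {id+1, id+2, …, (i+1)d}` of vertices. -/
def sigmaB (d i : ℕ) : Finset ℕ := Finset.Icc (i * d + 1) ((i + 1) * d)

/-- The `d`-tree `T_0` on vertex set `{1, …, d(Q+1)}`: its simplices are the nonempty
subsets `σ` with `max σ − min σ ≤ d` (equivalently, `a ≤ b + d` for all `a, b ∈ σ`). -/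
def T0 (d Q : ℕ) : Finset (Finset ℕ) :=
  (Finset.Icc 1 (d * (Q + 1))).powerset.filter
    (fun σ => σ.Nonempty ∧ ∀ a ∈ σ, ∀ b ∈ σ, a ≤ b + d)

/-- The `k`-th attached root vertex (for `k = 0, 1, …`): a fresh vertex label. -/
def rootVtx (d Q k : ℕ) : ℕ := d * (Q + 1) + k + 1

/-- The index of the block to which the `k`-th root vertex is attached in `T_r`
(`k = 0, …, r−1`).  Writing `r = aQ + b` with `b = r % Q`, the first `b` vertices are
attached to `σ_{⌈Q/b⌉}, σ_{⌈2Q/b⌉}, …, σ_{⌈bQ/b⌉} = σ_Q` (coming from the base case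
`T_b`), and the remaining `aQ` vertices are attached cyclically to `σ_1, …, σ_Q`
(`a` full rounds), corresponding to the recursion `T_r = T_{r−Q} + (σ_1, …, σ_Q)`. -/
def target (Q r k : ℕ) : ℕ :=
  if k < r % Q then ((k + 1) * Q + (r % Q) - 1) / (r % Q)
  else (k - r % Q) % Q + 1

/-- The rooted `d`-tree `T_r`: the complex `T_0` together with, for each `k < r`, the
root vertex `rootVtx d Q k` attached to the `(d−1)`-simplex `σ_{target Q r k}`
(attaching adds all sets `τ ∪ {v}` for `τ ⊆ σ`). -/
def Tr (d Q r : ℕ) : Finset (Finset ℕ) :=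
  T0 d Q ∪ (Finset.range r).biUnion
    (fun k => (sigmaB d (target Q r k)).powerset.image (insert (rootVtx d Q k)))

/-- The set of vertex roots of `T_r`. -/
def rootSet (d Q r : ℕ) : Finset ℕ := (Finset.range r).image (rootVtx d Q)

/-- `e_C(S)`: the number of nonempty simplices of `C` with at least one vertex in `S`. -/
def eCount (C : Finset (Finset ℕ)) (S : Finset ℕ) : ℕ :=
  (C.filter (fun σ => σ.Nonempty ∧ (σ ∩ S).Nonempty)).card

/-- The density `dens_C(S) = e_C(S)/|S|`. -/
noncomputable def dens (C : Finset (Finset ℕ)) (S : Finset ℕ) : ℝ :=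
  (eCount C S : ℝ) / (S.card : ℝ)

/-- The vertex set of a complex. -/
def verts (C : Finset (Finset ℕ)) : Finset ℕ := C.sup id

/-- The unrooted vertices of `T_r`: all vertices except the simplex root `σ_0` and the
vertex roots. -/
def unrooted (d Q r : ℕ) : Finset ℕ :=
  verts (Tr d Q r) \ (sigmaB d 0 ∪ rootSet d Q r)
open Finset

namespace TrAux

lemma mem_sigmaB {d i x : ℕ} : x ∈ sigmaB d i ↔ i*d + 1 ≤ x ∧ x ≤ i*d + d := by
  simp [sigmaB, Finset.mem_Icc, add_mul, one_mul]

lemma sigmaB_card (d i : ℕ) : (sigmaB d i).card = d := by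
  simp [sigmaB, Nat.card_Icc, add_mul]

lemma sigmaB_subset {d Q i : ℕ} (hi : i ≤ Q) : sigmaB d i ⊆ Finset.Icc 1 (d*(Q+1)) := by
  intro x hx
  rw [mem_sigmaB] at hx
  rw [Finset.mem_Icc]
  constructor
  · omega
  · have : i * d + d ≤ d * (Q+1) := by
      have := Nat.mul_le_mul_right d hi
      nlinarith
    omega

lemma mem_T0 {d Q : ℕ} {σ : Finset ℕ} :
    σ ∈ T0 d Q ↔ σ ⊆ Finset.Icc 1 (d*(Q+1)) ∧ σ.Nonempty ∧ ∀ a ∈ σ, ∀ b ∈ σ, a ≤ b + d := by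
  simp [T0, Finset.mem_filter, Finset.mem_powerset, and_assoc]

lemma ceil_div_le_iff {x b t : ℕ} (hb : 0 < b) : (x + b - 1)/b ≤ t ↔ x ≤ t*b := by
  rw [Nat.div_le_iff_le_mul_add_pred hb, Nat.mul_comm b t]
  omega

lemma target_pos {Q r k : ℕ} (hQ : 1 ≤ Q) : 1 ≤ target Q r k := by
  unfold target
  split
  · rename_i h
    have hb : 0 < r % Q := by omega
    rw [Nat.le_div_iff_mul_le hb]
    have : 0 < (k+1)*Q := Nat.mul_pos (by omega) (by omega)
    omega
  · omega

lemma target_le {Q r k : ℕ} (hQ : 1 ≤ Q) (hk : k < r) : target Q r k ≤ Q := by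
  unfold target
  split
  · rename_i h
    have hb : 0 < r % Q := by omega
    rw [ceil_div_le_iff hb]
    have : (k+1) ≤ r % Q := h
    calc (k+1)*Q ≤ (r % Q) * Q := Nat.mul_le_mul_right Q this
    _ ≤ Q * (r % Q) := by rw [Nat.mul_comm]
  · have := Nat.mod_lt (k - r % Q) (show 0 < Q by omega)
    omega

lemma rootVtx_gt {d Q k : ℕ} : d*(Q+1) < rootVtx d Q k := by
  unfold rootVtx; omega

lemma rootVtx_inj {d Q : ℕ} : Function.Injective (rootVtx d Q) := by
  intro a b h; unfold rootVtx at h; omega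

lemma mem_rootSet {d Q r x : ℕ} : x ∈ rootSet d Q r ↔ ∃ k < r, x = rootVtx d Q k := by
  simp [rootSet, Finset.mem_image, eq_comm]

lemma rootSet_card (d Q r : ℕ) : (rootSet d Q r).card = r := by
  rw [rootSet, Finset.card_image_of_injective _ rootVtx_inj, Finset.card_range]

lemma verts_Tr (d Q r : ℕ) (hQ : 1 ≤ Q) :
    verts (Tr d Q r) = Finset.Icc 1 (d*(Q+1)) ∪ rootSet d Q r := by
  ext x
  rw [verts, Finset.mem_sup]
  constructor
  · rintro ⟨σ, hσ, hx⟩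
    simp only [id] at hx
    rw [Tr, Finset.mem_union] at hσ
    rcases hσ with hσ | hσ
    · rw [mem_T0] at hσ
      exact Finset.mem_union_left _ (hσ.1 hx)
    · simp only [Finset.mem_biUnion, Finset.mem_range, Finset.mem_image,
        Finset.mem_powerset] at hσ
      obtain ⟨k, hk, τ, hτ, rfl⟩ := hσ
      rcases Finset.mem_insert.1 hx with rfl | hx
      · exact Finset.mem_union_right _ (mem_rootSet.2 ⟨k, hk, rfl⟩)
      · exact Finset.mem_union_left _ (sigmaB_subset (target_le hQ hk) (hτ hx))
  · intro hx
    rcases Finset.mem_union.1 hx with hx | hx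
    · refine ⟨{x}, ?_, by simp⟩
      rw [Tr, Finset.mem_union]
      left
      rw [mem_T0]
      refine ⟨by simpa using hx, ⟨x, by simp⟩, by simp⟩
    · obtain ⟨k, hk, rfl⟩ := mem_rootSet.1 hx
      refine ⟨{rootVtx d Q k}, ?_, by simp⟩
      rw [Tr, Finset.mem_union]
      right
      simp only [Finset.mem_biUnion, Finset.mem_range, Finset.mem_image, Finset.mem_powerset]
      exact ⟨k, hk, ∅, by simp, by simp⟩

lemma unrooted_eq (d Q r : ℕ) (hQ : 1 ≤ Q) :
    unrooted d Q r = Finset.Icc (d+1) (d*(Q+1)) := by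
  rw [unrooted, verts_Tr d Q r hQ]
  ext x
  simp only [Finset.mem_sdiff, Finset.mem_union, Finset.mem_Icc, mem_sigmaB, mem_rootSet]
  constructor
  · rintro ⟨h1 | h2, h3⟩
    · push_neg at h3
      refine ⟨?_, h1.2⟩
      rcases Nat.lt_or_ge x (d+1) with h | h
      · exfalso; exact absurd (h3.1 (by omega)) (by omega)
      · exact h
    · obtain ⟨k, hk, rfl⟩ := h2
      exfalso
      exact h3 (Or.inr ⟨k, hk, rfl⟩)
  · intro h
    constructor
    · left; omega
    · rintro (h2 | ⟨k, hk, rfl⟩)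
      · omega
      · have := @rootVtx_gt d Q k; omega

end TrAux
namespace TrAux

lemma rootVtx_not_mem_Icc {d Q k x : ℕ} (hx : x ∈ Finset.Icc 1 (d*(Q+1))) :
    rootVtx d Q k ≠ x := by
  rw [Finset.mem_Icc] at hx
  have := @rootVtx_gt d Q k
  omega

lemma attach_mem_iff {d Q r k : ℕ} {σ : Finset ℕ} :
    σ ∈ (sigmaB d (target Q r k)).powerset.image (insert (rootVtx d Q k)) ↔
      ∃ τ ⊆ sigmaB d (target Q r k), σ = insert (rootVtx d Q k) τ := by
  simp only [Finset.mem_image, Finset.mem_powerset]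
  constructor
  · rintro ⟨τ, h1, rfl⟩; exact ⟨τ, h1, rfl⟩
  · rintro ⟨τ, h1, rfl⟩; exact ⟨τ, h1, rfl⟩

lemma attach_not_mem_T0 {d Q r k : ℕ} {σ : Finset ℕ}
    (hσ : σ ∈ (sigmaB d (target Q r k)).powerset.image (insert (rootVtx d Q k))) :
    σ ∉ T0 d Q := by
  obtain ⟨τ, _, rfl⟩ := attach_mem_iff.1 hσ
  intro hmem
  rw [mem_T0] at hmem
  exact rootVtx_not_mem_Icc (hmem.1 (Finset.mem_insert_self _ _)) rfl

lemma disjoint_T0_attach (d Q r : ℕ) :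
    Disjoint (T0 d Q) ((Finset.range r).biUnion
      (fun k => (sigmaB d (target Q r k)).powerset.image (insert (rootVtx d Q k)))) := by
  rw [Finset.disjoint_right]
  intro σ hσ
  rw [Finset.mem_biUnion] at hσ
  obtain ⟨k, _, hσ⟩ := hσ
  exact attach_not_mem_T0 hσ

lemma root_mem_attach_unique {d Q r : ℕ} {k j : ℕ} (hQ : 1 ≤ Q) (hj : j < r)
    {σ : Finset ℕ} (hσ : σ ∈ (sigmaB d (target Q r j)).powerset.image (insert (rootVtx d Q j)))
    (hk : rootVtx d Q k ∈ σ) : k = j := by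
  obtain ⟨τ, hτ, rfl⟩ := attach_mem_iff.1 hσ
  rcases Finset.mem_insert.1 hk with h | h
  · exact rootVtx_inj h
  · exact absurd rfl (rootVtx_not_mem_Icc (sigmaB_subset (target_le hQ hj) (hτ h)))

lemma attach_pairwise_disjoint {d Q r : ℕ} (hQ : 1 ≤ Q) {k j : ℕ} (hk : k < r) (hj : j < r)
    (hne : k ≠ j) :
    Disjoint ((sigmaB d (target Q r k)).powerset.image (insert (rootVtx d Q k)))
      ((sigmaB d (target Q r j)).powerset.image (insert (rootVtx d Q j))) := by
  rw [Finset.disjoint_left]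
  intro σ h1 h2
  obtain ⟨τ, _, rfl⟩ := attach_mem_iff.1 h1
  exact hne (root_mem_attach_unique hQ hj h2 (Finset.mem_insert_self _ _))

lemma attach_filter_facet {d Q r k : ℕ} (hQ : 1 ≤ Q) (hk : k < r) :
    (((sigmaB d (target Q r k)).powerset.image (insert (rootVtx d Q k))).filter
      (fun σ => σ.card = d+1)) = {insert (rootVtx d Q k) (sigmaB d (target Q r k))} := by
  have hroot : rootVtx d Q k ∉ sigmaB d (target Q r k) := fun h =>
    rootVtx_not_mem_Icc (sigmaB_subset (target_le hQ hk) h) rfl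
  ext σ
  rw [Finset.mem_filter, Finset.mem_singleton]
  constructor
  · rintro ⟨h1, h2⟩
    obtain ⟨τ, hτ, rfl⟩ := attach_mem_iff.1 h1
    have hv : rootVtx d Q k ∉ τ := fun h =>
      rootVtx_not_mem_Icc (sigmaB_subset (target_le hQ hk) (hτ h)) rfl
    rw [Finset.card_insert_of_notMem hv] at h2
    have : τ = sigmaB d (target Q r k) :=
      Finset.eq_of_subset_of_card_le hτ (by rw [sigmaB_card]; omega)
    rw [this]
  · rintro rfl
    refine ⟨attach_mem_iff.2 ⟨_, Finset.Subset.refl _, rfl⟩, ?_⟩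
    rw [Finset.card_insert_of_notMem hroot, sigmaB_card]

lemma T0_facets (d Q : ℕ) :
    ((T0 d Q).filter (fun σ => σ.card = d+1)).card = d*Q := by
  have key : ((T0 d Q).filter (fun σ => σ.card = d+1)).card = (Finset.Icc 1 (d*Q)).card := by
    symm
    apply Finset.card_bij (fun a _ => Finset.Icc a (a+d))
    · intro a ha
      rw [Finset.mem_Icc] at ha
      rw [Finset.mem_filter]
      constructor
      · rw [mem_T0]
        refine ⟨?_, ⟨a, Finset.mem_Icc.2 ⟨le_refl a, by omega⟩⟩, ?_⟩
        · intro x hx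
          rw [Finset.mem_Icc] at hx ⊢
          have : d * Q + d = d * (Q+1) := by ring
          omega
        · intro x hx y hy
          rw [Finset.mem_Icc] at hx hy
          omega
      · rw [Nat.card_Icc]; omega
    · intro a ha b hb h
      have h1 : a ∈ Finset.Icc b (b+d) := by
        rw [← h]; exact Finset.mem_Icc.2 ⟨le_refl a, by omega⟩
      have h2 : b ∈ Finset.Icc a (a+d) := by
        rw [h]; exact Finset.mem_Icc.2 ⟨le_refl b, by omega⟩
      rw [Finset.mem_Icc] at h1 h2
      omega
    · intro σ hσ
      rw [Finset.mem_filter, mem_T0] at hσ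
      obtain ⟨⟨hsub, hne, hdiam⟩, hcard⟩ := hσ
      set a := σ.min' hne with ha
      have hamem : a ∈ σ := Finset.min'_mem _ _
      have hσeq : σ = Finset.Icc a (a+d) := by
        apply Finset.eq_of_subset_of_card_le
        · intro x hx
          rw [Finset.mem_Icc]
          exact ⟨Finset.min'_le _ _ hx, hdiam x hx a hamem⟩
        · rw [Nat.card_Icc, hcard]; omega
      have hend : a + d ∈ σ := by rw [hσeq]; exact Finset.mem_Icc.2 ⟨by omega, le_refl _⟩
      have h1 := hsub hamem
      have h2 := hsub hend
      rw [Finset.mem_Icc] at h1 h2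
      refine ⟨a, Finset.mem_Icc.2 ⟨h1.1, ?_⟩, hσeq.symm⟩
      have : d * Q + d = d * (Q+1) := by ring
      omega
  rw [key, Nat.card_Icc]
  omega

lemma Tr_facets (d Q r : ℕ) (hQ : 1 ≤ Q) :
    ((Tr d Q r).filter (fun σ => σ.card = d+1)).card = d*Q + r := by
  rw [Tr, Finset.filter_union, Finset.card_union_of_disjoint
    (Finset.disjoint_filter_filter (disjoint_T0_attach d Q r)), T0_facets]
  congr 1
  rw [Finset.filter_biUnion]
  rw [Finset.card_biUnion]
  · rw [Finset.sum_congr rfl (fun k hk => by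
      rw [attach_filter_facet hQ (Finset.mem_range.1 hk), Finset.card_singleton])]
    simp
  · intro k hk j hj hne
    exact Finset.disjoint_filter_filter
      (attach_pairwise_disjoint hQ (Finset.mem_range.1 hk) (Finset.mem_range.1 hj) hne)

end TrAux
namespace TrAux

lemma insert_card_image {v : ℕ} {A : Finset ℕ} (hv : v ∉ A) (F : Finset (Finset ℕ))
    (hF : ∀ τ ∈ F, τ ⊆ A) : (F.image (insert v)).card = F.card := by
  apply Finset.card_image_of_injOn
  intro τ hτ τ' hτ' h
  have h1 : v ∉ τ := fun hx => hv (hF τ hτ hx)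
  have h2 : v ∉ τ' := fun hx => hv (hF τ' hτ' hx)
  rw [← Finset.erase_insert h1, ← Finset.erase_insert h2, h]

lemma powerset_filter_meet_card {A S : Finset ℕ} :
    ((A.powerset).filter (fun τ => (τ ∩ S).Nonempty)).card = 2^A.card - 2^(A \ S).card := by
  have hneg : (A.powerset).filter (fun τ => ¬(τ ∩ S).Nonempty) = (A \ S).powerset := by
    ext τ
    simp only [Finset.mem_filter, Finset.mem_powerset, Finset.not_nonempty_iff_eq_empty,
      ← Finset.disjoint_iff_inter_eq_empty, Finset.subset_sdiff]
  have := Finset.card_filter_add_card_filter_not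
    (s := A.powerset) (p := fun τ => (τ ∩ S).Nonempty)
  rw [hneg, Finset.card_powerset, Finset.card_powerset] at this
  have hle : (A \ S).card ≤ A.card := Finset.card_le_card (Finset.sdiff_subset)
  have h2 : (2:ℕ)^(A \ S).card ≤ 2^A.card := Nat.pow_le_pow_right (by omega) hle
  omega

lemma attach_filter_meet_card {d Q r k : ℕ} (hQ : 1 ≤ Q) (hk : k < r) {S : Finset ℕ}
    (hS : S ⊆ Finset.Icc (d+1) (d*(Q+1))) :
    (((sigmaB d (target Q r k)).powerset.image (insert (rootVtx d Q k))).filter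
      (fun σ => σ.Nonempty ∧ (σ ∩ S).Nonempty)).card
    = 2^d - 2^((sigmaB d (target Q r k) \ S).card) := by
  have hvS : rootVtx d Q k ∉ S := by
    intro h
    have := hS h; rw [Finset.mem_Icc] at this
    have := @rootVtx_gt d Q k
    omega
  have hvA : rootVtx d Q k ∉ sigmaB d (target Q r k) := fun h =>
    rootVtx_not_mem_Icc (sigmaB_subset (target_le hQ hk) h) rfl
  have key : ((sigmaB d (target Q r k)).powerset.image (insert (rootVtx d Q k))).filter
      (fun σ => σ.Nonempty ∧ (σ ∩ S).Nonempty)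
      = ((sigmaB d (target Q r k)).powerset.filter (fun τ => (τ ∩ S).Nonempty)).image
          (insert (rootVtx d Q k)) := by
    ext σ
    simp only [Finset.mem_filter, Finset.mem_image, Finset.mem_powerset]
    constructor
    · rintro ⟨⟨τ, hτ, rfl⟩, _, hmeet⟩
      refine ⟨τ, ⟨hτ, ?_⟩, rfl⟩
      obtain ⟨w, hw⟩ := hmeet
      rw [Finset.mem_inter] at hw
      rcases Finset.mem_insert.1 hw.1 with rfl | h
      · exact absurd hw.2 hvS
      · exact ⟨w, Finset.mem_inter.2 ⟨h, hw.2⟩⟩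
    · rintro ⟨τ, ⟨hτ, hmeet⟩, rfl⟩
      refine ⟨⟨τ, hτ, rfl⟩, Finset.insert_nonempty _ _, ?_⟩
      obtain ⟨w, hw⟩ := hmeet
      rw [Finset.mem_inter] at hw
      exact ⟨w, Finset.mem_inter.2 ⟨Finset.mem_insert_of_mem hw.1, hw.2⟩⟩
  rw [key, insert_card_image hvA _ (fun τ hτ => Finset.mem_powerset.1 (Finset.mem_filter.1 hτ).1),
    powerset_filter_meet_card, sigmaB_card]

lemma eCount_decomp (d Q r : ℕ) (hQ : 1 ≤ Q) {S : Finset ℕ}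
    (hS : S ⊆ Finset.Icc (d+1) (d*(Q+1))) :
    eCount (Tr d Q r) S
      = ((T0 d Q).filter (fun σ => σ.Nonempty ∧ (σ ∩ S).Nonempty)).card
        + ∑ k ∈ Finset.range r, (2^d - 2^((sigmaB d (target Q r k) \ S).card)) := by
  rw [eCount, Tr, Finset.filter_union, Finset.card_union_of_disjoint
    (Finset.disjoint_filter_filter (disjoint_T0_attach d Q r))]
  congr 1
  rw [Finset.filter_biUnion, Finset.card_biUnion]
  · exact Finset.sum_congr rfl (fun k hk =>
      attach_filter_meet_card hQ (Finset.mem_range.1 hk) hS)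
  · intro k hk j hj hne
    exact Finset.disjoint_filter_filter
      (attach_pairwise_disjoint hQ (Finset.mem_range.1 hk) (Finset.mem_range.1 hj) hne)

lemma T0_meet_decomp (d Q : ℕ) (hd : 1 ≤ d) :
    (T0 d Q).filter (fun σ => σ.Nonempty ∧ (σ ∩ Finset.Icc (d+1) (d*(Q+1))).Nonempty)
      = (Finset.Icc (d+1) (d*(Q+1))).biUnion
          (fun M => (Finset.Ico (M-d) M).powerset.image (insert M)) := by
  ext σ
  simp only [Finset.mem_filter, Finset.mem_biUnion, Finset.mem_image, Finset.mem_powerset]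
  constructor
  · rintro ⟨hT0, hne, hmeet⟩
    rw [mem_T0] at hT0
    obtain ⟨hsub, -, hdiam⟩ := hT0
    obtain ⟨w, hw⟩ := hmeet
    rw [Finset.mem_inter, Finset.mem_Icc] at hw
    set M := σ.max' hne with hMdef
    have hM : M ∈ σ := Finset.max'_mem _ _
    have hMub := hsub hM
    rw [Finset.mem_Icc] at hMub
    have hwM : w ≤ M := Finset.le_max' σ w hw.1
    refine ⟨M, Finset.mem_Icc.2 ⟨by omega, hMub.2⟩, σ.erase M, ?_, Finset.insert_erase hM⟩
    intro x hx
    have hxσ := Finset.mem_of_mem_erase hx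
    have hxne := Finset.ne_of_mem_erase hx
    rw [Finset.mem_Ico]
    have hle := Finset.le_max' σ x hxσ
    have := hdiam M hM x hxσ
    omega
  · rintro ⟨M, hM, τ, hτ, rfl⟩
    rw [Finset.mem_Icc] at hM
    have hτ' : ∀ x ∈ τ, M - d ≤ x ∧ x < M := fun x hx => Finset.mem_Ico.1 (hτ hx)
    refine ⟨?_, Finset.insert_nonempty _ _,
      ⟨M, Finset.mem_inter.2 ⟨Finset.mem_insert_self _ _, Finset.mem_Icc.2 ⟨hM.1, hM.2⟩⟩⟩⟩
    rw [mem_T0]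
    refine ⟨?_, Finset.insert_nonempty _ _, ?_⟩
    · intro x hx
      rw [Finset.mem_Icc]
      rcases Finset.mem_insert.1 hx with rfl | hx
      · omega
      · have := hτ' x hx; omega
    · intro a ha b hb
      have ha' : a ≤ M := by
        rcases Finset.mem_insert.1 ha with rfl | h
        · omega
        · exact (hτ' a h).2.le
      have hb' : M - d ≤ b := by
        rcases Finset.mem_insert.1 hb with rfl | h
        · omega
        · exact (hτ' b h).1
      omega

lemma A_U (d Q : ℕ) (hd : 1 ≤ d) :
    ((T0 d Q).filter (fun σ => σ.Nonempty ∧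
      (σ ∩ Finset.Icc (d+1) (d*(Q+1))).Nonempty)).card = d*Q*2^d := by
  rw [T0_meet_decomp d Q hd, Finset.card_biUnion]
  · have hcard : ∀ M ∈ Finset.Icc (d+1) (d*(Q+1)),
        ((Finset.Ico (M-d) M).powerset.image (insert M)).card = 2^d := by
      intro M hM
      rw [Finset.mem_Icc] at hM
      have hMnot : M ∉ Finset.Ico (M-d) M := by simp
      rw [insert_card_image hMnot _ (fun τ hτ => Finset.mem_powerset.1 hτ),
        Finset.card_powerset, Nat.card_Ico]
      congr 1
      omega
    rw [Finset.sum_congr rfl hcard, Finset.sum_const, Nat.card_Icc, smul_eq_mul]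
    have : d * (Q+1) + 1 - (d+1) = d * Q := by ring_nf; omega
    rw [this]
  · intro M hM M' hM' hne
    rw [Function.onFun, Finset.disjoint_left]
    rintro σ h1 h2
    simp only [Finset.mem_image, Finset.mem_powerset] at h1 h2
    obtain ⟨τ, hτ, rfl⟩ := h1
    obtain ⟨τ', hτ', heq⟩ := h2
    apply hne
    have hMle : M ≤ M' := by
      have : M ∈ insert M' τ' := by rw [heq]; exact Finset.mem_insert_self _ _
      rcases Finset.mem_insert.1 this with rfl | h
      · rfl
      · exact (Finset.mem_Ico.1 (hτ' h)).2.le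
    have hM'le : M' ≤ M := by
      have : M' ∈ insert M τ := by rw [← heq]; exact Finset.mem_insert_self _ _
      rcases Finset.mem_insert.1 this with rfl | h
      · rfl
      · exact (Finset.mem_Ico.1 (hτ h)).2.le
    omega

lemma sigmaB_subset_U {d Q i : ℕ} (hi1 : 1 ≤ i) (hi : i ≤ Q) :
    sigmaB d i ⊆ Finset.Icc (d+1) (d*(Q+1)) := by
  intro x hx
  rw [mem_sigmaB] at hx
  rw [Finset.mem_Icc]
  have h1 : d ≤ i * d := by nlinarith
  have h2 : i * d + d ≤ d * (Q+1) := by nlinarith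
  omega

lemma eCount_U (d Q r : ℕ) (hd : 1 ≤ d) (hQ : 1 ≤ Q) :
    eCount (Tr d Q r) (Finset.Icc (d+1) (d*(Q+1))) = d*Q*2^d + r * (2^d - 1) := by
  rw [eCount_decomp d Q r hQ (Finset.Subset.refl _), A_U d Q hd]
  congr 1
  have : ∀ k ∈ Finset.range r,
      2^d - 2^((sigmaB d (target Q r k) \ Finset.Icc (d+1) (d*(Q+1))).card) = 2^d - 1 := by
    intro k hk
    have : sigmaB d (target Q r k) \ Finset.Icc (d+1) (d*(Q+1)) = ∅ := by
      rw [Finset.sdiff_eq_empty_iff_subset]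
      exact sigmaB_subset_U (target_pos hQ) (target_le hQ (Finset.mem_range.1 hk))
    rw [this]
    simp
  rw [Finset.sum_congr rfl this, Finset.sum_const, Finset.card_range, smul_eq_mul]

end TrAux
namespace TrAux

def nxtD (d Q : ℕ) (S : Finset ℕ) (v : ℕ) : ℕ :=
  if h : (S.filter (fun w => v < w)).Nonempty then (S.filter (fun w => v < w)).min' h
  else d*(Q+1)+1

def gapD (d Q : ℕ) (S : Finset ℕ) (v : ℕ) : ℕ := min d (nxtD d Q S v - v - 1)

lemma lt_nxtD {d Q : ℕ} {S : Finset ℕ} {v : ℕ} (hv : v ≤ d*(Q+1)) : v < nxtD d Q S v := by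
  unfold nxtD
  split
  · rename_i h
    have := Finset.min'_mem _ h
    rw [Finset.mem_filter] at this
    exact this.2
  · omega

lemma nxtD_le {d Q : ℕ} {S : Finset ℕ} {v w : ℕ} (hw : w ∈ S) (hvw : v < w) :
    nxtD d Q S v ≤ w := by
  have hne : (S.filter (fun w => v < w)).Nonempty := ⟨w, Finset.mem_filter.2 ⟨hw, hvw⟩⟩
  rw [nxtD, dif_pos hne]
  exact Finset.min'_le _ _ (Finset.mem_filter.2 ⟨hw, hvw⟩)

lemma nxtD_le_N1 {d Q : ℕ} {S : Finset ℕ} (hS : S ⊆ Finset.Icc (d+1) (d*(Q+1))) (v : ℕ) :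
    nxtD d Q S v ≤ d*(Q+1)+1 := by
  rw [nxtD]
  split
  · rename_i h
    have := Finset.min'_mem _ h
    rw [Finset.mem_filter] at this
    have := hS this.1
    rw [Finset.mem_Icc] at this
    omega
  · omega

lemma gapD_le (d Q : ℕ) (S : Finset ℕ) (v : ℕ) : gapD d Q S v ≤ d := min_le_left _ _

lemma add_gapD_le {d Q : ℕ} {S : Finset ℕ} (hS : S ⊆ Finset.Icc (d+1) (d*(Q+1))) {v : ℕ}
    (hv : v ≤ d*(Q+1)) : v + gapD d Q S v ≤ d*(Q+1) := by
  have h1 := nxtD_le_N1 hS v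
  have h2 := lt_nxtD (S := S) hv
  have h3 : gapD d Q S v ≤ nxtD d Q S v - v - 1 := min_le_right _ _
  omega

lemma no_S_in_gap {d Q : ℕ} {S : Finset ℕ} {v w : ℕ} (hw : w ∈ S) (hvw : v < w) :
    ¬ (w ≤ v + gapD d Q S v) := by
  intro h
  have h1 := nxtD_le (d := d) (Q := Q) hw hvw
  have h3 : gapD d Q S v ≤ nxtD d Q S v - v - 1 := min_le_right _ _
  omega

def famA (d v : ℕ) : Finset (Finset ℕ) := (Finset.Ico (v-d) v).powerset.image (insert v)

def famB (d v u : ℕ) : Finset (Finset ℕ) :=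
  ((Finset.Ico (u-d) u).erase v).powerset.image (fun τ => insert v (insert u τ))

def fam (d Q : ℕ) (S : Finset ℕ) (v : ℕ) : Finset (Finset ℕ) :=
  famA d v ∪ (Finset.Ioc v (v + gapD d Q S v)).biUnion (famB d v)

lemma famA_mem {d v : ℕ} {σ : Finset ℕ} (h : σ ∈ famA d v) :
    v ∈ σ ∧ ∀ w ∈ σ, v - d ≤ w ∧ w ≤ v := by
  rw [famA] at h
  simp only [Finset.mem_image, Finset.mem_powerset] at h
  obtain ⟨τ, hτ, rfl⟩ := h
  refine ⟨Finset.mem_insert_self _ _, ?_⟩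
  intro w hw
  rcases Finset.mem_insert.1 hw with rfl | hw
  · omega
  · have := Finset.mem_Ico.1 (hτ hw); omega

lemma famB_mem {d v u : ℕ} (hvu : v < u) {σ : Finset ℕ} (h : σ ∈ famB d v u) :
    v ∈ σ ∧ u ∈ σ ∧ ∀ w ∈ σ, (u - d ≤ w ∨ w = v) ∧ w ≤ u := by
  rw [famB] at h
  simp only [Finset.mem_image, Finset.mem_powerset] at h
  obtain ⟨τ, hτ, rfl⟩ := h
  have hu : u ∈ insert v (insert u τ) := Finset.mem_insert_of_mem (Finset.mem_insert_self _ _)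
  refine ⟨Finset.mem_insert_self _ _, hu, ?_⟩
  intro w hw
  rcases Finset.mem_insert.1 hw with rfl | hw
  · exact ⟨Or.inr rfl, by omega⟩
  · rcases Finset.mem_insert.1 hw with rfl | hw
    · exact ⟨Or.inl (by omega), le_refl _⟩
    · have h1 := hτ hw
      have h2 := Finset.mem_of_mem_erase h1
      rw [Finset.mem_Ico] at h2
      exact ⟨Or.inl h2.1, h2.2.le⟩

lemma fam_mem_le {d Q : ℕ} {S : Finset ℕ} {v : ℕ} (hv : v ∈ S) {σ : Finset ℕ}
    (h : σ ∈ fam d Q S v) :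
    v ∈ σ ∧ ∀ w ∈ σ, w ∈ S → w ≤ v := by
  rw [fam, Finset.mem_union] at h
  rcases h with h | h
  · obtain ⟨h1, h2⟩ := famA_mem h
    exact ⟨h1, fun w hw _ => (h2 w hw).2⟩
  · rw [Finset.mem_biUnion] at h
    obtain ⟨u, hu, h⟩ := h
    rw [Finset.mem_Ioc] at hu
    obtain ⟨h1, h2, h3⟩ := famB_mem hu.1 h
    refine ⟨h1, fun w hw hwS => ?_⟩
    by_contra hgt
    push_neg at hgt
    exact no_S_in_gap hwS hgt (le_trans (h3 w hw).2 hu.2)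

lemma fam_subset_filter {d Q : ℕ} {S : Finset ℕ} (hS : S ⊆ Finset.Icc (d+1) (d*(Q+1)))
    {v : ℕ} (hv : v ∈ S) :
    fam d Q S v ⊆ (T0 d Q).filter (fun σ => σ.Nonempty ∧ (σ ∩ S).Nonempty) := by
  have hvIcc := hS hv
  rw [Finset.mem_Icc] at hvIcc
  intro σ h
  have hvσ := (fam_mem_le hv h).1
  have hne : σ.Nonempty := ⟨v, hvσ⟩
  rw [Finset.mem_filter]
  refine ⟨?_, hne, ⟨v, Finset.mem_inter.2 ⟨hvσ, hv⟩⟩⟩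
  rw [mem_T0]
  rw [fam, Finset.mem_union] at h
  refine ⟨?_, hne, ?_⟩
  · intro x hx
    rw [Finset.mem_Icc]
    rcases h with h | h
    · have := (famA_mem h).2 x hx
      omega
    · rw [Finset.mem_biUnion] at h
      obtain ⟨u, hu, h⟩ := h
      rw [Finset.mem_Ioc] at hu
      have := (famB_mem hu.1 h).2.2 x hx
      have hule : v + gapD d Q S v ≤ d*(Q+1) := add_gapD_le hS hvIcc.2
      rcases this.1 with h1 | h1 <;> omega
  · intro a ha b hb
    rcases h with h | h
    · have h1 := (famA_mem h).2 a ha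
      have h2 := (famA_mem h).2 b hb
      omega
    · rw [Finset.mem_biUnion] at h
      obtain ⟨u, hu, h⟩ := h
      rw [Finset.mem_Ioc] at hu
      have h1 := (famB_mem hu.1 h).2.2 a ha
      have h2 := (famB_mem hu.1 h).2.2 b hb
      have hgd := gapD_le d Q S v
      rcases h1.1 with h1' | h1' <;> rcases h2.1 with h2' | h2' <;> omega

lemma famA_card {d v : ℕ} (hv : d ≤ v) : (famA d v).card = 2^d := by
  rw [famA]
  have hnot : v ∉ Finset.Ico (v-d) v := by simp
  rw [insert_card_image hnot _ (fun τ hτ => Finset.mem_powerset.1 hτ), Finset.card_powerset,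
    Nat.card_Ico]
  congr 1
  omega

lemma famB_card {d v u : ℕ} (hvd : d ≤ v) (hvu : v < u) (hud : u ≤ v + d) :
    (famB d v u).card = 2^(d-1) := by
  rw [famB]
  have hvmem : v ∈ Finset.Ico (u-d) u := Finset.mem_Ico.2 ⟨by omega, hvu⟩
  have hcard : ((Finset.Ico (u-d) u).erase v).card = d - 1 := by
    rw [Finset.card_erase_of_mem hvmem, Nat.card_Ico]
    omega
  rw [← hcard, ← Finset.card_powerset]
  apply Finset.card_image_of_injOn
  intro τ hτ τ' hτ' heq
  rw [Finset.mem_coe, Finset.mem_powerset] at hτ hτ'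
  have hvτ : ∀ ρ ∈ [τ, τ'], v ∉ ρ ∧ u ∉ ρ := by
    intro ρ hρ
    have hsub : ρ ⊆ (Finset.Ico (u-d) u).erase v := by
      rcases List.mem_pair.1 hρ with rfl | rfl
      · exact hτ
      · exact hτ'
    constructor
    · intro hx
      exact (Finset.mem_erase.1 (hsub hx)).1 rfl
    · intro hx
      have := Finset.mem_Ico.1 (Finset.mem_of_mem_erase (hsub hx))
      omega
  have h1 := hvτ τ (by simp)
  have h2 := hvτ τ' (by simp)
  have e1 : v ∉ insert u τ := by
    rw [Finset.mem_insert]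
    push_neg
    exact ⟨by omega, h1.1⟩
  have e2 : v ∉ insert u τ' := by
    rw [Finset.mem_insert]
    push_neg
    exact ⟨by omega, h2.1⟩
  have := congrArg (fun ρ => Finset.erase ρ v) heq
  simp only [Finset.erase_insert e1, Finset.erase_insert e2] at this
  have := congrArg (fun ρ => Finset.erase ρ u) this
  simp only [Finset.erase_insert h1.2, Finset.erase_insert h2.2] at this
  exact this

lemma fam_card {d Q : ℕ} {S : Finset ℕ} (hS : S ⊆ Finset.Icc (d+1) (d*(Q+1)))
    {v : ℕ} (hv : v ∈ S) :
    (fam d Q S v).card = 2^d + gapD d Q S v * 2^(d-1) := by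
  have hvIcc := hS hv
  rw [Finset.mem_Icc] at hvIcc
  rw [fam, Finset.card_union_of_disjoint, famA_card (by omega)]
  · congr 1
    rw [Finset.card_biUnion]
    · have hconst : ∑ u ∈ Finset.Ioc v (v + gapD d Q S v), (famB d v u).card
          = ∑ _u ∈ Finset.Ioc v (v + gapD d Q S v), 2^(d-1) := by
        apply Finset.sum_congr rfl
        intro u hu
        rw [Finset.mem_Ioc] at hu
        have hgd := gapD_le d Q S v
        exact famB_card (by omega) hu.1 (by omega)
      rw [hconst, Finset.sum_const, Nat.card_Ioc, smul_eq_mul]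
      congr 1
      omega
    · intro u hu u' hu' hne
      rw [Finset.mem_coe, Finset.mem_Ioc] at hu hu'
      rw [Function.onFun, Finset.disjoint_left]
      intro σ hσ hσ'
      obtain ⟨-, h1, h2⟩ := famB_mem hu.1 hσ
      obtain ⟨-, h1', h2'⟩ := famB_mem hu'.1 hσ'
      exact hne (le_antisymm ((h2' u h1).2) ((h2 u' h1').2))
  · rw [Finset.disjoint_left]
    intro σ hσ hσ'
    rw [Finset.mem_biUnion] at hσ'
    obtain ⟨u, hu, hσ'⟩ := hσ'
    rw [Finset.mem_Ioc] at hu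
    have h1 := (famA_mem hσ).2 u (famB_mem hu.1 hσ').2.1
    omega

lemma A_lower {d Q : ℕ} {S : Finset ℕ} (hS : S ⊆ Finset.Icc (d+1) (d*(Q+1))) :
    ∑ v ∈ S, (2^d + gapD d Q S v * 2^(d-1))
      ≤ ((T0 d Q).filter (fun σ => σ.Nonempty ∧ (σ ∩ S).Nonempty)).card := by
  have hsub : S.biUnion (fam d Q S)
      ⊆ (T0 d Q).filter (fun σ => σ.Nonempty ∧ (σ ∩ S).Nonempty) := by
    intro σ h
    rw [Finset.mem_biUnion] at h
    obtain ⟨v, hv, h⟩ := h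
    exact fam_subset_filter hS hv h
  calc ∑ v ∈ S, (2^d + gapD d Q S v * 2^(d-1))
      = ∑ v ∈ S, (fam d Q S v).card := Finset.sum_congr rfl (fun v hv => (fam_card hS hv).symm)
    _ = (S.biUnion (fam d Q S)).card := by
        rw [Finset.card_biUnion]
        intro v hv v' hv' hne
        rw [Function.onFun, Finset.disjoint_left]
        intro σ h h'
        obtain ⟨m1, m2⟩ := fam_mem_le hv h
        obtain ⟨m1', m2'⟩ := fam_mem_le hv' h'
        exact hne (le_antisymm (m2' v m1 hv) (m2 v' m1' hv'))
    _ ≤ _ := Finset.card_le_card hsub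

end TrAux
namespace TrAux

def hh (Q b i : ℕ) : ℕ := (i*Q + b - 1)/b

def heavyIdx (Q b : ℕ) : Finset ℕ := (Finset.Icc 1 b).image (hh Q b)

lemma hh_le_iff {Q b i t : ℕ} (hb : 1 ≤ b) : hh Q b i ≤ t ↔ i*Q ≤ t*b := by
  rw [hh, ceil_div_le_iff hb]

lemma hh_mul_ge {Q b i : ℕ} (hb : 1 ≤ b) : i*Q ≤ hh Q b i * b :=
  (hh_le_iff hb).1 (le_refl _)

lemma hh_mul_le {Q b i : ℕ} : hh Q b i * b ≤ i*Q + b - 1 := Nat.div_mul_le_self _ b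

lemma hh_strict_mono {Q b i i' : ℕ} (hb : 1 ≤ b) (hbQ : b ≤ Q) (hi : i < i') :
    hh Q b i < hh Q b i' := by
  have l1 := hh_mul_ge (Q := Q) (b := b) (i := i') hb
  have l2 := hh_mul_le (Q := Q) (b := b) (i := i)
  have l3 : (i+1)*Q ≤ i'*Q := Nat.mul_le_mul_right Q (by omega)
  have l4 : (i+1)*Q = i*Q + Q := by ring
  have key : hh Q b i * b < hh Q b i' * b := by omega
  exact lt_of_mul_lt_mul_right key (Nat.zero_le b)

def cnt (Q b t : ℕ) : ℕ := ((Finset.Icc 1 b).filter (fun i => hh Q b i ≤ t)).card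

lemma cnt_eq {Q b t : ℕ} (hQ : 1 ≤ Q) (hb : 1 ≤ b) (hbQ : b ≤ Q) (ht : t ≤ Q) :
    cnt Q b t = t*b/Q := by
  have hdiv : t*b/Q ≤ b := by
    have h1 : t*b ≤ Q*b := Nat.mul_le_mul_right b ht
    calc t*b/Q ≤ Q*b/Q := Nat.div_le_div_right h1
      _ = b := Nat.mul_div_cancel_left b hQ
  have : (Finset.Icc 1 b).filter (fun i => hh Q b i ≤ t) = Finset.Icc 1 (t*b/Q) := by
    ext i
    rw [Finset.mem_filter, Finset.mem_Icc, Finset.mem_Icc, hh_le_iff hb,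
      ← Nat.le_div_iff_mul_le hQ]
    omega
  rw [cnt, this, Nat.card_Icc, Nat.add_sub_cancel]

lemma cnt_succ {Q b t : ℕ} (hb : 1 ≤ b) (hbQ : b ≤ Q) :
    cnt Q b (t+1) = cnt Q b t + (if t+1 ∈ heavyIdx Q b then 1 else 0) := by
  rw [cnt, cnt]
  have hsplit : (Finset.Icc 1 b).filter (fun i => hh Q b i ≤ t+1)
      = (Finset.Icc 1 b).filter (fun i => hh Q b i ≤ t)
        ∪ (Finset.Icc 1 b).filter (fun i => hh Q b i = t+1) := by
    ext i
    simp only [Finset.mem_union, Finset.mem_filter]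
    constructor
    · rintro ⟨h1, h2⟩
      rcases Nat.lt_or_ge (hh Q b i) (t+1) with h | h
      · exact Or.inl ⟨h1, by omega⟩
      · exact Or.inr ⟨h1, by omega⟩
    · rintro (⟨h1, h2⟩ | ⟨h1, h2⟩) <;> exact ⟨h1, by omega⟩
  rw [hsplit, Finset.card_union_of_disjoint]
  · congr 1
    split
    · rename_i h
      rw [heavyIdx, Finset.mem_image] at h
      obtain ⟨i, hi, hhi⟩ := h
      have : (Finset.Icc 1 b).filter (fun i => hh Q b i = t+1) = {i} := by
        ext i'
        rw [Finset.mem_filter, Finset.mem_singleton]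
        constructor
        · rintro ⟨h1', h2'⟩
          by_contra hne
          rw [Finset.mem_Icc] at h1' hi
          rcases Nat.lt_or_ge i i' with h | h
          · have := hh_strict_mono (Q := Q) hb hbQ h
            omega
          · have := hh_strict_mono (Q := Q) hb hbQ (show i' < i by omega)
            omega
        · rintro rfl
          exact ⟨hi, hhi⟩
      rw [this]
      rfl
    · rename_i h
      rw [heavyIdx, Finset.mem_image] at h
      push_neg at h
      have : (Finset.Icc 1 b).filter (fun i => hh Q b i = t+1) = ∅ := by
        rw [Finset.filter_eq_empty_iff]
        intro i hi
        exact h i hi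
      rw [this]
      rfl
  · rw [Finset.disjoint_left]
    intro i h1 h2
    rw [Finset.mem_filter] at h1 h2
    omega

lemma cnt_full {Q b : ℕ} (hQ : 1 ≤ Q) (hb : 1 ≤ b) (hbQ : b ≤ Q) : cnt Q b Q = b := by
  rw [cnt_eq hQ hb hbQ (le_refl Q), Nat.mul_div_cancel_left b hQ]

def hposD (d Q b y : ℕ) : ℕ :=
  ((Finset.Icc (d+1) y).filter (fun p => (p-1)/d ∈ heavyIdx Q b)).card

lemma hposD_succ {d Q b y : ℕ} (hy : d ≤ y) :
    hposD d Q b (y+1) = hposD d Q b y + (if y/d ∈ heavyIdx Q b then 1 else 0) := by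
  rw [hposD, hposD, ← Finset.insert_Icc_right_eq_Icc_add_one (by omega : d+1 ≤ y+1), Finset.filter_insert]
  have hnot : y + 1 ∉ Finset.Icc (d+1) y := by
    rw [Finset.mem_Icc]; omega
  have : (y + 1 - 1)/d = y/d := by norm_num
  split
  · rename_i h
    rw [Finset.card_insert_of_notMem (fun hc => hnot (Finset.mem_of_mem_filter _ hc))]
    rw [this] at h
    simp [h]
  · rename_i h
    rw [this] at h
    simp [h]

lemma blk_eq {d t w : ℕ} (hd : 1 ≤ d) (hw1 : 1 ≤ w) (hwd : w ≤ d) :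
    (d + t*d + w - 1)/d = t + 1 := by
  have e1 : d*(t+1) = t*d + d := by ring
  have h2 : d + t*d + w - 1 = (w-1) + d*(t+1) := by omega
  rw [h2, Nat.add_mul_div_left _ _ (by omega : 0 < d), Nat.div_eq_of_lt (by omega : w-1 < d)]
  omega

lemma hposD_inner {d Q b : ℕ} (hd : 1 ≤ d) (t : ℕ) :
    ∀ w, w ≤ d → hposD d Q b (d + t*d + w)
      = hposD d Q b (d + t*d) + (if t+1 ∈ heavyIdx Q b then w else 0) := by
  intro w
  induction w with
  | zero => intro _; simp
  | succ w IH =>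
    intro hw
    have hIH := IH (by omega)
    have hstep := hposD_succ (d := d) (Q := Q) (b := b) (y := d + t*d + w) (by omega)
    have hblk : (d + t*d + w)/d = t+1 := by
      have e1 : d + t*d + w = w + d*(t+1) := by ring
      rw [e1, Nat.add_mul_div_left _ _ (by omega : 0 < d), Nat.div_eq_of_lt (by omega : w < d)]
      omega
    rw [show d + t*d + (w+1) = (d + t*d + w) + 1 by omega, hstep, hblk, hIH]
    split <;> omega

lemma hposD_boundary {d Q b : ℕ} (hd : 1 ≤ d) (hb : 1 ≤ b) (hbQ : b ≤ Q) :
    ∀ t, hposD d Q b (d + t*d) = d * cnt Q b t := by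
  intro t
  induction t with
  | zero =>
    have h0 : hposD d Q b (d + 0*d) = 0 := by
      rw [hposD]
      have he : Finset.Icc (d+1) (d + 0*d) = ∅ := by rw [Finset.Icc_eq_empty_iff]; omega
      rw [he]
      rfl
    have hc : cnt Q b 0 = 0 := by
      rw [cnt]
      have he : (Finset.Icc 1 b).filter (fun i => hh Q b i ≤ 0) = ∅ := by
        rw [Finset.filter_eq_empty_iff]
        intro i hi
        rw [Finset.mem_Icc] at hi
        intro hcon
        rw [hh_le_iff hb] at hcon
        have : 1*Q ≤ i*Q := Nat.mul_le_mul_right Q hi.1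
        omega
      rw [he]
      rfl
    rw [h0, hc, Nat.mul_zero]
  | succ t IH =>
    have hin := hposD_inner (d := d) (Q := Q) (b := b) hd t d (le_refl d)
    rw [show d + (t+1)*d = d + t*d + d by ring, hin, IH, cnt_succ hb hbQ]
    split <;> ring

lemma decompose_y {d Q y : ℕ} (hd : 1 ≤ d) (h1 : d < y) (h2 : y ≤ d*(Q+1)) :
    ∃ t w, y = d + t*d + w ∧ 1 ≤ w ∧ w ≤ d ∧ t < Q := by
  set u := y - d - 1 with hu
  refine ⟨u/d, u%d + 1, ?_, by omega, ?_, ?_⟩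
  · have := Nat.div_add_mod u d
    have e1 : (u/d)*d = d*(u/d) := by ring
    omega
  · have := Nat.mod_lt u (show 0 < d by omega)
    omega
  · rw [Nat.div_lt_iff_lt_mul (show 0 < d by omega)]
    have e2 : d*(Q+1) = Q*d + d := by ring
    omega

lemma heavy_idx_facts {Q b t : ℕ} (hb : 1 ≤ b) (hbQ : b ≤ Q) (h : t+1 ∈ heavyIdx Q b) :
    ∃ i, 1 ≤ i ∧ i ≤ b ∧ i*Q ≤ t*b + b ∧ t*b < i*Q ∧ t*b/Q = i - 1 := by
  rw [heavyIdx, Finset.mem_image] at h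
  obtain ⟨i, hi, hhi⟩ := h
  rw [Finset.mem_Icc] at hi
  have f1 : i*Q ≤ (t+1)*b := by
    have := (hh_le_iff (Q := Q) (i := i) hb).1 (le_of_eq hhi)
    omega
  have f2 : ¬ (i*Q ≤ t*b) := by
    intro hcon
    have := (hh_le_iff (Q := Q) (i := i) hb).2 hcon
    omega
  have e1 : (t+1)*b = t*b + b := by ring
  have hQ : 1 ≤ Q := le_trans hb hbQ
  refine ⟨i, hi.1, hi.2, by omega, by omega, ?_⟩
  have e2 : i*Q = (i-1)*Q + Q := by
    have h' : i = (i-1)+1 := by omega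
    calc i*Q = ((i-1)+1)*Q := by rw [← h']
    _ = (i-1)*Q + Q := by ring
  apply Nat.div_eq_of_lt_le
  · omega
  · have e3 : (i-1+1)*Q = (i-1)*Q + Q := by ring
    omega

lemma hposU {d Q b y : ℕ} (hd : 1 ≤ d) (hb : 1 ≤ b) (hbQ : b ≤ Q)
    (hy1 : d ≤ y) (hy2 : y ≤ d*(Q+1)) :
    (Q:ℤ) * hposD d Q b y ≤ b * ((y:ℤ) - d) := by
  have hQ : 1 ≤ Q := le_trans hb hbQ
  rcases Nat.eq_or_lt_of_le hy1 with heq | hlt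
  · have h0 : hposD d Q b y = 0 := by
      rw [hposD]
      have he : Finset.Icc (d+1) y = ∅ := by rw [Finset.Icc_eq_empty_iff]; omega
      rw [he]
      rfl
    rw [h0, ← heq]
    simp
  obtain ⟨t, w, rfl, hw1, hwd, htQ⟩ := decompose_y hd hlt hy2
  rw [hposD_inner hd t w hwd, hposD_boundary hd hb hbQ t, cnt_eq hQ hb hbQ (le_of_lt htQ)]
  split
  · rename_i hH
    obtain ⟨i, hi1, hib, f1, f2, f3⟩ := heavy_idx_facts hb hbQ hH
    rw [f3]
    have c1 : ((i:ℤ) - 1) = ((i - 1 : ℕ) : ℤ) := by push_cast; omega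
    push_cast
    rw [← c1]
    have g1 : (i:ℤ)*Q ≤ t*b + b := by exact_mod_cast f1
    have g2 : ((Q:ℤ) - b) * (d - w) ≥ 0 := by
      apply mul_nonneg <;> push_cast <;> omega
    nlinarith [mul_le_mul_of_nonneg_right g1 (show (0:ℤ) ≤ d by positivity)]
  · have hfloor : (t*b/Q) * Q ≤ t*b := Nat.div_mul_le_self _ _
    have g1 : ((t*b/Q : ℕ):ℤ) * Q ≤ (t:ℤ)*b := by exact_mod_cast hfloor
    push_cast
    nlinarith [mul_le_mul_of_nonneg_right g1 (show (0:ℤ) ≤ d by positivity),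
      mul_nonneg (show (0:ℤ) ≤ b by positivity) (show (0:ℤ) ≤ w by positivity)]

lemma hposL {d Q b y : ℕ} (hd : 1 ≤ d) (hb : 1 ≤ b) (hbQ : b ≤ Q)
    (hy1 : d ≤ y) (hy2 : y ≤ d*(Q+1)) :
    (b:ℤ) * ((y:ℤ) - d) ≤ Q * hposD d Q b y + ((Q:ℤ)-1) * d := by
  have hQ : 1 ≤ Q := le_trans hb hbQ
  rcases Nat.eq_or_lt_of_le hy1 with heq | hlt
  · rw [← heq]
    have : (0:ℤ) ≤ Q * hposD d Q b d + ((Q:ℤ)-1)*d := by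
      apply add_nonneg
      · positivity
      · apply mul_nonneg
        · push_cast; omega
        · positivity
    simpa using this
  obtain ⟨t, w, rfl, hw1, hwd, htQ⟩ := decompose_y hd hlt hy2
  rw [hposD_inner hd t w hwd, hposD_boundary hd hb hbQ t, cnt_eq hQ hb hbQ (le_of_lt htQ)]
  split
  · rename_i hH
    obtain ⟨i, hi1, hib, f1, f2, f3⟩ := heavy_idx_facts hb hbQ hH
    rw [f3]
    have c1 : ((i:ℤ) - 1) = ((i - 1 : ℕ) : ℤ) := by push_cast; omega
    push_cast
    rw [← c1]
    have g2 : (t:ℤ)*b + 1 ≤ i*Q := by exact_mod_cast f2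
    nlinarith [mul_le_mul_of_nonneg_right g2 (show (0:ℤ) ≤ d by positivity),
      mul_le_mul_of_nonneg_left (show (w:ℤ) ≤ d by exact_mod_cast hwd)
        (show (0:ℤ) ≤ (Q:ℤ) - b by push_cast; omega)]
  · rename_i hH
    have hc : cnt Q b (t+1) = cnt Q b t := by
      rw [cnt_succ hb hbQ, if_neg hH]
      omega
    rw [cnt_eq hQ hb hbQ (le_of_lt htQ), cnt_eq hQ hb hbQ (by omega : t+1 ≤ Q)] at hc
    have hmod := Nat.div_add_mod ((t+1)*b) Q
    have hmlt := Nat.mod_lt ((t+1)*b) (show 0 < Q by omega)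
    have e4 : Q*((t+1)*b/Q) = Q*(t*b/Q) := by rw [hc]
    have e1 : (t+1)*b = t*b + b := by ring
    have gnat : t*b + b + 1 ≤ Q*(t*b/Q) + Q := by omega
    have g1 : (t:ℤ)*b + b + 1 ≤ Q * (((t*b/Q : ℕ)):ℤ) + Q := by exact_mod_cast gnat
    have hgoal : ((d * (t*b/Q) + 0 : ℕ) : ℤ) = (d:ℤ) * (((t*b/Q : ℕ)):ℤ) := by push_cast; ring
    rw [hgoal]
    have hwz : (1:ℤ) ≤ (w:ℤ) := by exact_mod_cast hw1
    have hwd' : (w:ℤ) ≤ (d:ℤ) := by exact_mod_cast hwd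
    have hcast : ((d + t*d + w : ℕ):ℤ) = (d:ℤ) + t*d + w := by push_cast; ring
    rw [hcast]
    nlinarith [mul_le_mul_of_nonneg_right g1 (show (0:ℤ) ≤ (d:ℤ) by positivity),
      mul_le_mul_of_nonneg_left hwd' (show (0:ℤ) ≤ (b:ℤ) by positivity)]

end TrAux
namespace TrAux

def claimedD (d Q : ℕ) (S : Finset ℕ) (t : ℕ) : ℕ :=
  ∑ v ∈ S, (min (v + gapD d Q S v) t - v)

def sctD (S : Finset ℕ) (t : ℕ) : ℕ := (S.filter (fun v => v ≤ t)).card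

def hpD (d Q b : ℕ) (S : Finset ℕ) (t : ℕ) : ℕ :=
  (S.filter (fun v => v ≤ t ∧ (v-1)/d ∈ heavyIdx Q b)).card

lemma sct_succ (S : Finset ℕ) (t : ℕ) :
    sctD S (t+1) = sctD S t + (if t+1 ∈ S then 1 else 0) := by
  rw [sctD, sctD]
  have hsplit : S.filter (fun v => v ≤ t+1)
      = S.filter (fun v => v ≤ t) ∪ S.filter (fun v => v = t+1) := by
    ext v
    simp only [Finset.mem_union, Finset.mem_filter]
    constructor
    · rintro ⟨h1, h2⟩
      rcases Nat.lt_or_ge v (t+1) with h | h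
      · exact Or.inl ⟨h1, by omega⟩
      · exact Or.inr ⟨h1, by omega⟩
    · rintro (⟨h1, h2⟩ | ⟨h1, h2⟩) <;> exact ⟨h1, by omega⟩
  rw [hsplit, Finset.card_union_of_disjoint]
  · congr 1
    split
    · rename_i h
      rw [show S.filter (fun v => v = t+1) = {t+1} from by
        ext v; simp only [Finset.mem_filter, Finset.mem_singleton]
        exact ⟨fun ⟨_, h2⟩ => h2, fun h2 => ⟨h2 ▸ h, h2⟩⟩]
      rfl
    · rename_i h
      rw [show S.filter (fun v => v = t+1) = ∅ from by
        rw [Finset.filter_eq_empty_iff]; rintro v hv rfl; exact h hv]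
      rfl
  · rw [Finset.disjoint_left]
    intro v h1 h2
    rw [Finset.mem_filter] at h1 h2
    omega

lemma hp_succ (d Q b : ℕ) (S : Finset ℕ) (t : ℕ) :
    hpD d Q b S (t+1) = hpD d Q b S t
      + (if t+1 ∈ S ∧ t/d ∈ heavyIdx Q b then 1 else 0) := by
  rw [hpD, hpD]
  have e0 : (t+1-1)/d = t/d := by norm_num
  have hsplit : S.filter (fun v => v ≤ t+1 ∧ (v-1)/d ∈ heavyIdx Q b)
      = S.filter (fun v => v ≤ t ∧ (v-1)/d ∈ heavyIdx Q b)
        ∪ S.filter (fun v => v = t+1 ∧ (v-1)/d ∈ heavyIdx Q b) := by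
    ext v
    simp only [Finset.mem_union, Finset.mem_filter]
    constructor
    · rintro ⟨h1, h2, h3⟩
      rcases Nat.lt_or_ge v (t+1) with h | h
      · exact Or.inl ⟨h1, by omega, h3⟩
      · exact Or.inr ⟨h1, by omega, h3⟩
    · rintro (⟨h1, h2, h3⟩ | ⟨h1, h2, h3⟩) <;> exact ⟨h1, by omega, h3⟩
  rw [hsplit, Finset.card_union_of_disjoint]
  · congr 1
    split
    · rename_i h
      rw [show S.filter (fun v => v = t+1 ∧ (v-1)/d ∈ heavyIdx Q b) = {t+1} from by
        ext v; simp only [Finset.mem_filter, Finset.mem_singleton]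
        constructor
        · rintro ⟨_, h2, _⟩; exact h2
        · rintro rfl; exact ⟨h.1, rfl, by rw [e0]; exact h.2⟩]
      rfl
    · rename_i h
      rw [show S.filter (fun v => v = t+1 ∧ (v-1)/d ∈ heavyIdx Q b) = ∅ from by
        rw [Finset.filter_eq_empty_iff]
        rintro v hv ⟨rfl, h3⟩
        rw [e0] at h3
        exact h ⟨hv, h3⟩]
      rfl
  · rw [Finset.disjoint_left]
    intro v h1 h2
    rw [Finset.mem_filter] at h1 h2
    omega

lemma claimed_mono (d Q : ℕ) (S : Finset ℕ) {t t' : ℕ} (h : t ≤ t') :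
    claimedD d Q S t ≤ claimedD d Q S t' :=
  Finset.sum_le_sum (fun v _ => by omega)

lemma claimed_succ_eq_of_mem {d Q : ℕ} {S : Finset ℕ} {t : ℕ} (hmem : t+1 ∈ S) :
    claimedD d Q S (t+1) = claimedD d Q S t := by
  apply Finset.sum_congr rfl
  intro v hv
  rcases le_or_gt v t with h | h
  · have h1 := nxtD_le (d := d) (Q := Q) hmem (show v < t+1 by omega)
    have h2 : gapD d Q S v ≤ nxtD d Q S v - v - 1 := min_le_right _ _
    omega
  · omega

lemma claimed_succ_ge_of_claim {d Q : ℕ} {S : Finset ℕ} {t v : ℕ} (hv : v ∈ S)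
    (hv1 : v ≤ t) (hv2 : t+1 ≤ v + gapD d Q S v) :
    claimedD d Q S t + 1 ≤ claimedD d Q S (t+1) := by
  have : claimedD d Q S t < claimedD d Q S (t+1) := by
    apply Finset.sum_lt_sum (fun w _ => by omega)
    exact ⟨v, hv, by omega⟩
  omega

lemma claimed_jump {d Q : ℕ} {S : Finset ℕ} {t v₀ : ℕ} (hv : v₀ ∈ S)
    (hg : gapD d Q S v₀ = d) (hle : v₀ + d ≤ t+1) :
    claimedD d Q S v₀ + d ≤ claimedD d Q S (t+1) := by
  rw [claimedD, claimedD, ← Finset.add_sum_erase _ _ hv, ← Finset.add_sum_erase _ _ hv]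
  have hmono : ∑ v ∈ S.erase v₀, (min (v + gapD d Q S v) v₀ - v)
      ≤ ∑ v ∈ S.erase v₀, (min (v + gapD d Q S v) (t+1) - v) :=
    Finset.sum_le_sum (fun v _ => by omega)
  rw [hg]
  omega

lemma nxtD_mem_or (d Q : ℕ) (S : Finset ℕ) (v : ℕ) :
    (nxtD d Q S v ∈ S ∧ v < nxtD d Q S v) ∨ nxtD d Q S v = d*(Q+1)+1 := by
  rw [nxtD]
  split
  · rename_i h
    left
    have := Finset.min'_mem _ h
    rw [Finset.mem_filter] at this
    exact ⟨this.1, this.2⟩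
  · right; rfl

lemma psi (d Q b : ℕ) (S : Finset ℕ) (hd : 1 ≤ d) (hb : 1 ≤ b) (hbQ : b < Q)
    (hS : S ⊆ Finset.Icc (d+1) (d*(Q+1))) :
    ∀ t, d ≤ t → t ≤ d*(Q+1) →
      (b:ℤ) * sctD S t ≤ Q * claimedD d Q S t + Q * hpD d Q b S t
        + (b * ((t:ℤ) - d) - Q * hposD d Q b t) := by
  intro t
  induction t using Nat.strong_induction_on with
  | _ t IH =>
  intro ht1 ht2
  rcases Nat.eq_or_lt_of_le ht1 with heq | hlt
  · subst heq
    have h1 : sctD S d = 0 := by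
      rw [sctD, Finset.card_eq_zero, Finset.filter_eq_empty_iff]
      intro v hv
      have := hS hv; rw [Finset.mem_Icc] at this
      omega
    have h2 : hposD d Q b d = 0 := by
      rw [hposD]
      have he : Finset.Icc (d+1) d = ∅ := by rw [Finset.Icc_eq_empty_iff]; omega
      rw [he]; rfl
    rw [h1, h2]
    have h3 : (0:ℤ) ≤ Q * claimedD d Q S d + Q * hpD d Q b S d := by positivity
    push_cast
    linarith
  · obtain ⟨t', rfl⟩ : ∃ t', t = t'+1 := ⟨t-1, by omega⟩
    have ht'd : d ≤ t' := by omega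
    have hIHt' := IH t' (by omega) ht'd (by omega)
    have hstep := hposD_succ (d := d) (Q := Q) (b := b) (y := t') ht'd
    by_cases hmem : t'+1 ∈ S
    · have hclaimed := claimed_succ_eq_of_mem (d := d) (Q := Q) hmem
      rw [sct_succ, hp_succ, hstep, hclaimed, if_pos hmem]
      by_cases hH : t'/d ∈ heavyIdx Q b
      · rw [if_pos ⟨hmem, hH⟩, if_pos hH]
        push_cast
        linarith
      · rw [if_neg (fun hc => hH hc.2), if_neg hH]
        push_cast
        linarith
    · by_cases hclaim : ∃ v ∈ S, v ≤ t' ∧ t'+1 ≤ v + gapD d Q S v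
      · obtain ⟨v, hv, hv1, hv2⟩ := hclaim
        have hclaimed := claimed_succ_ge_of_claim hv hv1 hv2
        rw [sct_succ, hp_succ, hstep, if_neg hmem, if_neg (fun hc => hmem hc.1)]
        have hc1 : (claimedD d Q S t' + 1 : ℤ) ≤ claimedD d Q S (t'+1) := by
          exact_mod_cast hclaimed
        have hQc1 : (Q:ℤ) * ((claimedD d Q S t' : ℤ) + 1) ≤ Q * claimedD d Q S (t'+1) :=
          mul_le_mul_of_nonneg_left hc1 (by positivity)
        by_cases hH : t'/d ∈ heavyIdx Q b
        · rw [if_pos hH]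
          push_cast
          push_cast at hQc1
          linarith
        · rw [if_neg hH]
          push_cast
          push_cast at hQc1
          linarith
      · push_neg at hclaim
        by_cases hne : (S.filter (fun v => v ≤ t')).Nonempty
        · -- jump case
          set v₀ := (S.filter (fun v => v ≤ t')).max' hne with hv₀def
          have hv₀mem : v₀ ∈ S ∧ v₀ ≤ t' := by
            have := Finset.max'_mem _ hne
            rw [Finset.mem_filter] at this
            exact this
          have hmax : ∀ w ∈ S, w ≤ t' → w ≤ v₀ := fun w hw hwt =>
            Finset.le_max' (S.filter (fun v => v ≤ t')) w (Finset.mem_filter.2 ⟨hw, hwt⟩)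
          have hv₀Icc := hS hv₀mem.1
          rw [Finset.mem_Icc] at hv₀Icc
          have hnoclaim := hclaim v₀ hv₀mem.1 hv₀mem.2
          have hgap : gapD d Q S v₀ = d := by
            rcases nxtD_mem_or d Q S v₀ with ⟨hn1, hn2⟩ | hn
            · have : ¬ (nxtD d Q S v₀ ≤ t') := fun hc => by
                have := hmax _ hn1 hc; omega
              have : nxtD d Q S v₀ ≠ t'+1 := fun hc => hmem (hc ▸ hn1)
              have h2 : gapD d Q S v₀ = min d (nxtD d Q S v₀ - v₀ - 1) := rfl
              omega
            · have h2 : gapD d Q S v₀ = min d (nxtD d Q S v₀ - v₀ - 1) := rfl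
              omega
          have hjump : v₀ + d ≤ t' := by
            have := hgap ▸ hnoclaim
            omega
          have hsct : sctD S (t'+1) = sctD S v₀ := by
            rw [sctD, sctD]
            congr 1
            ext w
            simp only [Finset.mem_filter]
            constructor
            · rintro ⟨h1, h2⟩
              refine ⟨h1, hmax w h1 ?_⟩
              rcases Nat.eq_or_lt_of_le h2 with h | h
              · exact absurd (h ▸ h1) hmem
              · omega
            · rintro ⟨h1, h2⟩
              exact ⟨h1, by omega⟩
          have hhp : hpD d Q b S v₀ ≤ hpD d Q b S (t'+1) := by
            apply Finset.card_le_card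
            intro w hw
            rw [Finset.mem_filter] at hw ⊢
            exact ⟨hw.1, by omega, hw.2.2⟩
          have hclaimed := claimed_jump hv₀mem.1 hgap (by omega : v₀ + d ≤ t'+1)
          have hIHv := IH v₀ (by omega) (by omega) (by omega)
          have hU := hposU (d := d) (Q := Q) (b := b) hd hb (by omega)
            (show d ≤ t'+1 by omega) (show t'+1 ≤ d*(Q+1) by omega)
          have hL := hposL (d := d) (Q := Q) (b := b) hd hb (by omega)
            (show d ≤ v₀ by omega) (show v₀ ≤ d*(Q+1) by omega)
          rw [hsct]
          have hc1 : ((claimedD d Q S v₀ : ℤ) + d) ≤ claimedD d Q S (t'+1) := by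
            exact_mod_cast hclaimed
          have hc2 : ((hpD d Q b S v₀ : ℤ)) ≤ hpD d Q b S (t'+1) := by
            exact_mod_cast hhp
          have hQd : ((Q:ℤ) - 1) * d = Q * (d:ℤ) - d := by ring
          have hQc1 : (Q:ℤ) * ((claimedD d Q S v₀ : ℤ) + d) ≤ Q * claimedD d Q S (t'+1) :=
            mul_le_mul_of_nonneg_left hc1 (by positivity)
          have hQc2 : (Q:ℤ) * (hpD d Q b S v₀ : ℤ) ≤ Q * hpD d Q b S (t'+1) :=
            mul_le_mul_of_nonneg_left hc2 (by positivity)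
          have hd' : (1:ℤ) ≤ (d:ℤ) := by exact_mod_cast hd
          push_cast at hU hL hIHv hQc1 hQc2 ⊢
          linarith
        · -- empty case
          have hsct : sctD S (t'+1) = 0 := by
            rw [sctD, Finset.card_eq_zero, Finset.filter_eq_empty_iff]
            intro w hw hwle
            rcases Nat.eq_or_lt_of_le hwle with h | h
            · exact hmem (h ▸ hw)
            · exact absurd ⟨w, Finset.mem_filter.2 ⟨hw, by omega⟩⟩ hne
          have hU := hposU (d := d) (Q := Q) (b := b) hd hb (by omega)
            (show d ≤ t'+1 by omega) (show t'+1 ≤ d*(Q+1) by omega)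
          rw [hsct]
          have h3 : (0:ℤ) ≤ Q * claimedD d Q S (t'+1) + Q * hpD d Q b S (t'+1) := by
            positivity
          push_cast at hU ⊢
          linarith

lemma core (d Q b : ℕ) (S : Finset ℕ) (hd : 1 ≤ d) (hb : 1 ≤ b) (hbQ : b < Q)
    (hS : S ⊆ Finset.Icc (d+1) (d*(Q+1))) :
    b * S.card ≤ Q * ((∑ v ∈ S, gapD d Q S v)
      + (S.filter (fun v => (v-1)/d ∈ heavyIdx Q b)).card) := by
  have hpsi := psi d Q b S hd hb hbQ hS (d*(Q+1)) (by nlinarith) (le_refl _)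
  have h1 : sctD S (d*(Q+1)) = S.card := by
    rw [sctD, Finset.filter_true_of_mem]
    intro v hv
    have := hS hv; rw [Finset.mem_Icc] at this
    omega
  have h2 : claimedD d Q S (d*(Q+1)) = ∑ v ∈ S, gapD d Q S v := by
    apply Finset.sum_congr rfl
    intro v hv
    have hvI := hS hv; rw [Finset.mem_Icc] at hvI
    have := add_gapD_le hS hvI.2
    omega
  have h3 : hpD d Q b S (d*(Q+1)) = (S.filter (fun v => (v-1)/d ∈ heavyIdx Q b)).card := by
    rw [hpD]
    congr 1
    apply Finset.filter_congr
    intro v hv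
    have := hS hv; rw [Finset.mem_Icc] at this
    exact and_iff_right (by omega)
  have h4 : hposD d Q b (d*(Q+1)) = d * b := by
    have : d*(Q+1) = d + Q*d := by ring
    rw [this, hposD_boundary hd hb (by omega) Q, cnt_full (by omega) hb (by omega)]
  rw [h1, h2, h3, h4] at hpsi
  have h5 : (b:ℤ) * ((d*(Q+1) : ℕ):ℤ) - (b:ℤ)*d - (Q:ℤ)*(d*b) = 0 := by push_cast; ring
  have : (b:ℤ) * S.card ≤ Q * ((∑ v ∈ S, gapD d Q S v)
      + (S.filter (fun v => (v-1)/d ∈ heavyIdx Q b)).card) := by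
    push_cast at hpsi ⊢
    linarith
  exact_mod_cast this

end TrAux
namespace TrAux

lemma blk_mem_sigmaB {d j v : ℕ} (hd : 1 ≤ d) (hv : 1 ≤ v) :
    v ∈ sigmaB d j ↔ (v-1)/d = j := by
  rw [mem_sigmaB]
  constructor
  · rintro ⟨h1, h2⟩
    apply Nat.div_eq_of_lt_le
    · have e1 : j*d = j*d := rfl
      omega
    · have e2 : (j+1)*d = j*d + d := by ring
      omega
  · intro h
    have hm := Nat.div_add_mod (v-1) d
    have hmod := Nat.mod_lt (v-1) (show 0 < d by omega)
    rw [h] at hm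
    have e3 : d*j = j*d := by ring
    omega

lemma sum_block_inter {d : ℕ} (hd : 1 ≤ d) (S : Finset ℕ)
    (hS : ∀ v ∈ S, 1 ≤ v) (J : Finset ℕ) :
    ∑ j ∈ J, (sigmaB d j ∩ S).card = (S.filter (fun v => (v-1)/d ∈ J)).card := by
  have hdecomp : S.filter (fun v => (v-1)/d ∈ J) = J.biUnion (fun j => sigmaB d j ∩ S) := by
    ext v
    simp only [Finset.mem_filter, Finset.mem_biUnion, Finset.mem_inter]
    constructor
    · rintro ⟨h1, h2⟩
      exact ⟨(v-1)/d, h2, (blk_mem_sigmaB hd (hS v h1)).2 rfl, h1⟩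
    · rintro ⟨j, hj, h1, h2⟩
      exact ⟨h2, ((blk_mem_sigmaB hd (hS v h2)).1 h1) ▸ hj⟩
  rw [hdecomp, Finset.card_biUnion]
  intro j hj j' hj' hne
  rw [Function.onFun, Finset.disjoint_left]
  intro v h1 h2
  rw [Finset.mem_inter] at h1 h2
  apply hne
  rw [← (blk_mem_sigmaB hd (hS v h1.2)).1 h1.1, ← (blk_mem_sigmaB hd (hS v h2.2)).1 h2.1]

lemma sum_blocks_full {d Q : ℕ} (hd : 1 ≤ d) (hQ : 1 ≤ Q) (S : Finset ℕ)
    (hS : S ⊆ Finset.Icc (d+1) (d*(Q+1))) :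
    ∑ j ∈ Finset.Icc 1 Q, (sigmaB d j ∩ S).card = S.card := by
  rw [sum_block_inter hd S (fun v hv => by
    have := hS hv; rw [Finset.mem_Icc] at this; omega)]
  rw [Finset.filter_true_of_mem]
  intro v hv
  have hvI := hS hv
  rw [Finset.mem_Icc] at hvI
  rw [Finset.mem_Icc]
  constructor
  · rw [Nat.le_div_iff_mul_le (show 0 < d by omega)]
    omega
  · rw [Nat.div_le_iff_le_mul_add_pred (show 0 < d by omega)]
    have e : d*(Q+1) = d*Q + d := by ring
    omega

lemma cyc_sum {Q : ℕ} (hQ : 1 ≤ Q) (f : ℕ → ℕ) :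
    ∀ a, ∑ k ∈ Finset.range (Q*a), f (k % Q) = a * ∑ j ∈ Finset.range Q, f j := by
  intro a
  induction a with
  | zero => simp
  | succ a IH =>
    have e : Q*(a+1) = Q*a + Q := by ring
    rw [e, Finset.sum_range_add, IH]
    have : ∑ i ∈ Finset.range Q, f ((Q*a + i) % Q) = ∑ j ∈ Finset.range Q, f j := by
      apply Finset.sum_congr rfl
      intro i hi
      rw [Finset.mem_range] at hi
      rw [Nat.mul_add_mod Q a i, Nat.mod_eq_of_lt hi]
    rw [this]
    ring

lemma sum_ck {d Q r : ℕ} (hd : 1 ≤ d) (hQ : 1 ≤ Q) (S : Finset ℕ)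
    (hS : S ⊆ Finset.Icc (d+1) (d*(Q+1))) :
    ∑ k ∈ Finset.range r, (sigmaB d (target Q r k) ∩ S).card
      = (r/Q) * S.card + (S.filter (fun v => (v-1)/d ∈ heavyIdx Q (r % Q))).card := by
  set b := r % Q with hb
  set a := r / Q with ha
  have hbr : b ≤ r := Nat.mod_le r Q
  have hra : r - b = Q*a := by
    have h := Nat.div_add_mod r Q
    rw [← ha, ← hb] at h
    omega
  have hS1 : ∀ v ∈ S, 1 ≤ v := fun v hv => by
    have := hS hv; rw [Finset.mem_Icc] at this; omega
  -- split the range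
  rw [Finset.range_eq_Ico, ← Finset.sum_Ico_consecutive _ (Nat.zero_le b) hbr]
  have hpart1 : ∑ k ∈ Finset.Ico 0 b, (sigmaB d (target Q r k) ∩ S).card
      = (S.filter (fun v => (v-1)/d ∈ heavyIdx Q b)).card := by
    rw [← sum_block_inter hd S hS1, heavyIdx]
    have hbQ : b < Q := Nat.mod_lt r (show 0 < Q by omega)
    rcases Nat.eq_zero_or_pos b with hb0 | hb1
    · rw [hb0]
      simp
    · rw [Finset.sum_image (by
        intro i hi i' hi' heq
        rw [Finset.mem_coe, Finset.mem_Icc] at hi hi'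
        by_contra hne
        rcases Nat.lt_or_ge i i' with h | h
        · have := hh_strict_mono (Q := Q) hb1 (le_of_lt hbQ) h
          omega
        · have := hh_strict_mono (Q := Q) hb1 (le_of_lt hbQ) (show i' < i by omega)
          omega)]
      have himg : Finset.Icc 1 b = (Finset.Ico 0 b).image (· + 1) := by
        ext i
        simp only [Finset.mem_Icc, Finset.mem_image, Finset.mem_Ico]
        constructor
        · rintro ⟨h1, h2⟩; exact ⟨i-1, by omega, by omega⟩
        · rintro ⟨k, hk, rfl⟩; omega
      rw [himg, Finset.sum_image (by intro i _ i' _ h; simp only at h; omega)]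
      apply Finset.sum_congr rfl
      intro k hk
      rw [Finset.mem_Ico] at hk
      have htgt : target Q r k = hh Q b (k+1) := by
        rw [target, if_pos (by omega : k < r % Q)]
        rfl
      rw [htgt]
  have hpart2 : ∑ k ∈ Finset.Ico b r, (sigmaB d (target Q r k) ∩ S).card
      = a * S.card := by
    rw [Finset.sum_Ico_eq_sum_range]
    have hcong : ∑ k ∈ Finset.range (r - b), (sigmaB d (target Q r (b + k)) ∩ S).card
        = ∑ k ∈ Finset.range (r - b), (sigmaB d (k % Q + 1) ∩ S).card := by
      apply Finset.sum_congr rfl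
      intro k hk
      have htgt : target Q r (b + k) = (b + k - b) % Q + 1 := by
        rw [target, if_neg (by omega : ¬ (b + k < r % Q))]
      rw [htgt, show b + k - b = k by omega]
    rw [hcong, hra, cyc_sum hQ (fun j => (sigmaB d (j + 1) ∩ S).card) a]
    congr 1
    rw [← sum_blocks_full hd hQ S hS]
    have himg : Finset.Icc 1 Q = (Finset.range Q).image (· + 1) := by
      ext i
      simp only [Finset.mem_Icc, Finset.mem_image, Finset.mem_range]
      constructor
      · rintro ⟨h1, h2⟩; exact ⟨i-1, by omega, by omega⟩
      · rintro ⟨k, hk, rfl⟩; omega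
    rw [himg, Finset.sum_image (by intro i _ i' _ h; simp only at h; omega)]
  rw [hpart1, hpart2]
  omega

lemma pow_ineq {d c : ℕ} (hc : c ≤ d) :
    c * (2^d - 1) ≤ d * (2^d - 2^(d-c)) := by
  obtain ⟨e, rfl⟩ : ∃ e, d = c + e := ⟨d - c, by omega⟩
  have hce : c + e - c = e := by omega
  rw [hce, pow_add]
  have h2c : c < 2^c := Nat.lt_two_pow_self
  have h2e : e < 2^e := Nat.lt_two_pow_self
  have h1 : (1:ℕ) ≤ 2^c := Nat.one_le_two_pow
  have h1e : (1:ℕ) ≤ 2^e := Nat.one_le_two_pow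
  zify [show (1:ℕ) ≤ 2^c * 2^e from by nlinarith, show (2:ℕ)^e ≤ 2^c*2^e from by nlinarith]
  have k1 : (c:ℤ) ≤ 2^c - 1 := by
    have : (c:ℤ) < 2^c := by exact_mod_cast h2c
    omega
  have k2 : (2:ℤ)^e - 1 ≤ e * 2^e := by
    rcases Nat.eq_zero_or_pos e with h | h
    · subst h; simp
    · have : (2:ℤ)^e ≤ e*2^e := by
        have : (1:ℤ) ≤ (e:ℤ) := by exact_mod_cast h
        nlinarith [show (0:ℤ) < 2^e from by positivity]
      omega
  have hpe : (0:ℤ) ≤ (e:ℤ)*2^e := by positivity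
  have hpc : (0:ℤ) ≤ (c:ℤ) := by positivity
  nlinarith [mul_le_mul_of_nonneg_left k1 hpe, mul_le_mul_of_nonneg_left k2 hpc]

lemma pow_d_ineq {d : ℕ} (hd : 1 ≤ d) : 2^d - 1 ≤ d * 2^(d-1) := by
  rcases d with _ | n
  · omega
  · rcases n with _ | m
    · simp
    · have e1 : (m + 1 + 1) - 1 = m + 1 := rfl
      rw [e1]
      have h2 : (2:ℕ)^(m+1+1) = 2 * 2^(m+1) := by rw [pow_succ]; ring
      have h3 : 2 * 2^(m+1) ≤ (m+1+1) * 2^(m+1) := Nat.mul_le_mul_right _ (by omega)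
      omega

end TrAux
namespace TrAux

lemma dens_def (C : Finset (Finset ℕ)) (S : Finset ℕ) :
    dens C S = (eCount C S : ℝ) / (S.card : ℝ) := rfl

set_option maxHeartbeats 1000000 in
lemma main_ineq (d Q r : ℕ) (hd : 1 ≤ d) (hQ : 1 ≤ Q) (S : Finset ℕ)
    (hS : S ⊆ Finset.Icc (d+1) (d*(Q+1))) :
    S.card * (d*Q*2^d + r*(2^d - 1)) ≤ d*Q * eCount (Tr d Q r) S := by
  classical
  set b := r % Q with hbdef
  set a := r / Q with hadef
  set G := ∑ v ∈ S, gapD d Q S v with hGdef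
  set H := (S.filter (fun v => (v-1)/d ∈ heavyIdx Q b)).card with hHdef
  set A := ((T0 d Q).filter (fun σ => σ.Nonempty ∧ (σ ∩ S).Nonempty)).card with hAdef
  set B := ∑ k ∈ Finset.range r, (2^d - 2^((sigmaB d (target Q r k) \ S).card)) with hBdef
  set C := ∑ k ∈ Finset.range r, (sigmaB d (target Q r k) ∩ S).card with hCdef
  have heC : eCount (Tr d Q r) S = A + B := by
    rw [hAdef, hBdef]; exact eCount_decomp d Q r hQ hS
  have hM : C = a * S.card + H := by
    rw [hCdef, hadef, hHdef, hbdef]; exact sum_ck hd hQ S hS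
  have hCore : b * S.card ≤ Q * (G + H) := by
    rcases Nat.eq_zero_or_pos b with h0 | h1
    · rw [h0]; omega
    · rw [hGdef, hHdef]
      exact core d Q b S hd h1 (hbdef ▸ Nat.mod_lt r (show 0 < Q by omega)) hS
  clear_value b a G H A B C
  have hA : S.card * 2^d + G * 2^(d-1) ≤ A := by
    rw [hAdef, hGdef]
    have h := A_lower (d := d) (Q := Q) hS
    calc S.card * 2^d + (∑ v ∈ S, gapD d Q S v) * 2^(d-1)
        = ∑ v ∈ S, (2^d + gapD d Q S v * 2^(d-1)) := by
          rw [Finset.sum_add_distrib, Finset.sum_const, smul_eq_mul, ← Finset.sum_mul]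
      _ ≤ _ := h
  have hB : C * (2^d - 1) ≤ d * B := by
    rw [hCdef, hBdef, Finset.sum_mul, Finset.mul_sum]
    apply Finset.sum_le_sum
    intro k hk
    have hcards := Finset.card_inter_add_card_sdiff (sigmaB d (target Q r k)) S
    rw [sigmaB_card] at hcards
    have hle : (sigmaB d (target Q r k) ∩ S).card ≤ d := by omega
    have := pow_ineq (d := d) hle
    have e : d - (sigmaB d (target Q r k) ∩ S).card
        = (sigmaB d (target Q r k) \ S).card := by omega
    rw [e] at this
    exact this
  have hg5 : 2^d - 1 ≤ d * 2^(d-1) := pow_d_ineq hd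
  have hr : r = Q * a + b := by
    have h := Nat.div_add_mod r Q
    rw [← hadef, ← hbdef] at h
    omega
  have h2d : (1:ℕ) ≤ 2^d := Nat.one_le_two_pow
  -- move to ℤ
  have zA : ((S.card : ℤ)) * 2^d + G * 2^(d-1) ≤ A := by exact_mod_cast hA
  have zB : (C:ℤ) * (2^d - 1) ≤ d * B := by
    have : ((C * (2^d - 1) : ℕ) : ℤ) ≤ ((d * B : ℕ) : ℤ) := by exact_mod_cast hB
    rw [Nat.cast_mul, Nat.cast_mul, Nat.cast_sub h2d] at this
    push_cast at this ⊢
    linarith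
  have zM : (C:ℤ) = a * S.card + H := by exact_mod_cast hM
  have zCore : (b:ℤ) * S.card ≤ Q * ((G:ℤ) + H) := by exact_mod_cast hCore
  have zg5 : ((2:ℤ)^d - 1) ≤ d * 2^(d-1) := by
    have : ((2^d - 1 : ℕ):ℤ) ≤ ((d * 2^(d-1) : ℕ):ℤ) := by exact_mod_cast hg5
    rw [Nat.cast_sub h2d] at this
    push_cast at this ⊢
    linarith
  have zr : (r:ℤ) = Q * a + b := by exact_mod_cast hr
  have zgoal : ((S.card:ℤ)) * (d*Q*2^d + r*(2^d - 1)) ≤ d*Q * ((A:ℤ) + B) := by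
    have p1 : (0:ℤ) ≤ (d:ℤ)*Q := by positivity
    have p2 : (0:ℤ) ≤ (Q:ℤ) := by positivity
    have p3 : (0:ℤ) ≤ ((2:ℤ)^d - 1) := by
      have : ((1:ℕ):ℤ) ≤ ((2^d : ℕ):ℤ) := by exact_mod_cast h2d
      push_cast at this
      linarith
    have p4 : (0:ℤ) ≤ (Q:ℤ) * G := by positivity
    rw [zM] at zB
    have m1 := mul_le_mul_of_nonneg_left zA p1
    have m2 := mul_le_mul_of_nonneg_left zB p2
    have m3 := mul_le_mul_of_nonneg_left zCore p3
    have m4 := mul_le_mul_of_nonneg_left zg5 p4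
    rw [zr]
    nlinarith [m1, m2, m3, m4]
  have zfin : ((S.card * (d*Q*2^d + r*(2^d-1)) : ℕ) : ℤ)
      ≤ ((d*Q * eCount (Tr d Q r) S : ℕ) : ℤ) := by
    rw [heC]
    push_cast [Nat.cast_sub h2d]
    push_cast at zgoal
    linarith
  exact_mod_cast zfin

end TrAux

/-- **Proposition.** For all integers `d, Q ≥ 1` and `r ≥ 0`, the rooted `d`-tree `T_r`
has `dQ + r` facets and `r` vertex roots, is balanced (the density of the set of all
unrooted vertices is minimal among all nonempty sets of unrooted vertices), and its
min-density is `2^d + (r/(dQ))·(2^d − 1)`. -/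
theorem Tr_balanced_and_density (d Q r : ℕ) (hd : 1 ≤ d) (hQ : 1 ≤ Q) :
    ((Tr d Q r).filter (fun σ => σ.card = d + 1)).card = d * Q + r ∧
    (rootSet d Q r).card = r ∧
    (∀ S ⊆ unrooted d Q r, S.Nonempty →
      dens (Tr d Q r) (unrooted d Q r) ≤ dens (Tr d Q r) S) ∧
    dens (Tr d Q r) (unrooted d Q r) =
      2 ^ d + ((r : ℝ) / ((d : ℝ) * (Q : ℝ))) * ((2 : ℝ) ^ d - 1) := by
  have hU := TrAux.unrooted_eq d Q r hQ
  have hUcard : (unrooted d Q r).card = d * Q := by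
    rw [hU, Nat.card_Icc]
    have e : d*(Q+1) = d*Q + d := by ring
    omega
  have heU : eCount (Tr d Q r) (unrooted d Q r) = d*Q*2^d + r*(2^d - 1) := by
    rw [hU]
    exact TrAux.eCount_U d Q r hd hQ
  have h2d : (1:ℕ) ≤ 2^d := Nat.one_le_two_pow
  have hdQpos : (0:ℝ) < ((d*Q : ℕ) : ℝ) := by
    have : 0 < d*Q := by positivity
    exact_mod_cast this
  refine ⟨TrAux.Tr_facets d Q r hQ, TrAux.rootSet_card d Q r, ?_, ?_⟩
  · intro S hsub hne
    have hScard : (0:ℝ) < (S.card : ℝ) := by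
      have : 0 < S.card := Finset.card_pos.2 hne
      exact_mod_cast this
    rw [TrAux.dens_def, TrAux.dens_def, hUcard, heU]
    rw [div_le_div_iff₀ (by exact_mod_cast hdQpos) hScard]
    have hmain := TrAux.main_ineq d Q r hd hQ S (hU ▸ hsub)
    have : (d*Q*2^d + r*(2^d - 1)) * S.card ≤ eCount (Tr d Q r) S * (d*Q) := by
      calc (d*Q*2^d + r*(2^d - 1)) * S.card
          = S.card * (d*Q*2^d + r*(2^d - 1)) := by ring
        _ ≤ d*Q * eCount (Tr d Q r) S := hmain
        _ = eCount (Tr d Q r) S * (d*Q) := by ring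
    exact_mod_cast this
  · rw [TrAux.dens_def, hUcard, heU]
    have hcast : ((d*Q*2^d + r*(2^d - 1) : ℕ) : ℝ)
        = (d:ℝ)*Q*2^d + r*((2:ℝ)^d - 1) := by
      push_cast [Nat.cast_sub h2d]
      ring
    rw [hcast]
    have hne : ((d:ℝ)*(Q:ℝ)) ≠ 0 := by positivity
    have hne2 : ((d*Q : ℕ):ℝ) = (d:ℝ)*Q := by push_cast; ring
    rw [hne2]
    field_simp
end

section
/- Let d, Q ≥ 1 and 0 < r < Q be integers, and for 1 ≤ i ≤ j ≤ Q let L[i,j] = |{i, i+1, …, j} ∩ {⌈Q/r⌉, ⌈2Q/r⌉, …, ⌈(r−1)Q/r⌉, Q}|. Then for every 1 ≤ i ≤ Q, the set S = σ_i ∪ σ_{i+1} ∪ … ∪ σ_Q satisfies dens_{T_r}(S) = 2^d + (2^d − 1)·L[i,Q] / (d(Q − i + 1)). -/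
/-- `L[i,j] = |{i, i+1, …, j} ∩ {⌈Q/r⌉, ⌈2Q/r⌉, …, ⌈(r−1)Q/r⌉, Q}|`
(note `⌈rQ/r⌉ = Q`, and `⌈x/r⌉ = (x + r − 1)/r` in natural arithmetic). -/
def Lfun (Q r i j : ℕ) : ℕ :=
  (Finset.Icc i j ∩ (Finset.Icc 1 r).image (fun k => (k * Q + r - 1) / r)).card

/-! ### Auxiliary lemmas -/

lemma card_powerset_filter_inter (A B : Finset ℕ) :
    (A.powerset.filter (fun τ => (τ ∩ B).Nonempty)).card = 2 ^ A.card - 2 ^ (A \ B).card := by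
  have key : A.powerset.filter (fun τ => ¬ (τ ∩ B).Nonempty) = (A \ B).powerset := by
    ext τ
    simp only [Finset.mem_filter, Finset.mem_powerset, Finset.not_nonempty_iff_eq_empty,
      ← Finset.disjoint_iff_inter_eq_empty, Finset.subset_sdiff]
  have h := Finset.card_filter_add_card_filter_not
    (s := A.powerset) (p := fun τ => (τ ∩ B).Nonempty)
  rw [key, Finset.card_powerset, Finset.card_powerset] at h
  have hle : 2 ^ (A \ B).card ≤ 2 ^ A.card :=
    Nat.pow_le_pow_right (by norm_num) (Finset.card_le_card (Finset.sdiff_subset))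
  omega

lemma insert_injOn' (m : ℕ) (A : Finset ℕ) (hm : m ∉ A) (s : Finset (Finset ℕ))
    (hs : ∀ τ ∈ s, τ ⊆ A) :
    Set.InjOn (fun τ : Finset ℕ => insert m τ) (↑s : Set (Finset ℕ)) := by
  intro τ hτ τ' hτ' h
  have h1 : m ∉ τ := fun hc => hm (hs τ hτ hc)
  have h2 : m ∉ τ' := fun hc => hm (hs τ' hτ' hc)
  have h' : insert m τ = insert m τ' := h
  rw [← Finset.erase_insert h1, ← Finset.erase_insert h2, h']

/-- The simplices of `T0` with minimum `m` and meeting `Icc iS N`. -/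
def Fm (d N iS m : ℕ) : Finset (Finset ℕ) :=
  ((Finset.Icc (m+1) (min (m+d) N)).powerset.filter
    (fun τ => iS ≤ m ∨ (τ ∩ Finset.Icc iS N).Nonempty)).image (insert m)

lemma card_Fm (d N iS m : ℕ) :
    (Fm d N iS m).card = if iS ≤ m then 2 ^ (Finset.Icc (m+1) (min (m+d) N)).card
      else 2 ^ (Finset.Icc (m+1) (min (m+d) N)).card
        - 2 ^ ((Finset.Icc (m+1) (min (m+d) N)) \ Finset.Icc iS N).card := by
  rw [Fm, Finset.card_image_of_injOn (insert_injOn' m (Finset.Icc (m+1) (min (m+d) N)) (by simp) _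
    (fun τ hτ => by simpa using (Finset.mem_filter.1 hτ).1))]
  by_cases h : iS ≤ m
  · rw [if_pos h, Finset.filter_true_of_mem (fun τ _ => Or.inl h), Finset.card_powerset]
  · rw [if_neg h]
    have hc : ∀ τ ∈ (Finset.Icc (m+1) (min (m+d) N)).powerset,
        (iS ≤ m ∨ (τ ∩ Finset.Icc iS N).Nonempty) ↔ (τ ∩ Finset.Icc iS N).Nonempty := by
      intro τ _; tauto
    rw [Finset.filter_congr hc, card_powerset_filter_inter]

lemma T0_filter_eq (d Q iS : ℕ) :
    (T0 d Q).filter (fun σ => σ.Nonempty ∧ (σ ∩ Finset.Icc iS (d*(Q+1))).Nonempty)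
      = (Finset.Ioc 0 (d*(Q+1))).biUnion (Fm d (d*(Q+1)) iS) := by
  set N := d*(Q+1)
  ext σ
  simp only [Finset.mem_filter, Finset.mem_biUnion, T0, Finset.mem_powerset, Finset.mem_Ioc]
  constructor
  · rintro ⟨⟨hsub, hne, hdiam⟩, -, hint⟩
    set m := σ.min' hne with hm
    have hmσ : m ∈ σ := σ.min'_mem hne
    have hm1 : 1 ≤ m := (Finset.mem_Icc.1 (hsub hmσ)).1
    have hmN : m ≤ N := (Finset.mem_Icc.1 (hsub hmσ)).2
    refine ⟨m, ⟨by omega, hmN⟩, ?_⟩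
    rw [Fm, Finset.mem_image]
    refine ⟨σ.erase m, Finset.mem_filter.2 ⟨Finset.mem_powerset.2 ?_, ?_⟩,
      Finset.insert_erase hmσ⟩
    · intro x hx
      have hxσ : x ∈ σ := Finset.mem_of_mem_erase hx
      have hxm : x ≠ m := Finset.ne_of_mem_erase hx
      have h1 : m ≤ x := Finset.min'_le σ x hxσ
      have h2 : x ≤ m + d := hdiam x hxσ m hmσ
      have h3 : x ≤ N := (Finset.mem_Icc.1 (hsub hxσ)).2
      rw [Finset.mem_Icc]
      omega
    · obtain ⟨x, hx⟩ := hint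
      rw [Finset.mem_inter, Finset.mem_Icc] at hx
      by_cases hxm : x = m
      · left; omega
      · right
        exact ⟨x, Finset.mem_inter.2 ⟨Finset.mem_erase.2 ⟨hxm, hx.1⟩,
          Finset.mem_Icc.2 hx.2⟩⟩
  · rintro ⟨m, ⟨hm0, hmN⟩, hσ⟩
    rw [Fm, Finset.mem_image] at hσ
    obtain ⟨τ, hτ, rfl⟩ := hσ
    rw [Finset.mem_filter, Finset.mem_powerset] at hτ
    obtain ⟨hτsub, hcond⟩ := hτ
    have hτb : ∀ x ∈ τ, m + 1 ≤ x ∧ x ≤ m + d ∧ x ≤ N := by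
      intro x hx
      have := Finset.mem_Icc.1 (hτsub hx)
      omega
    refine ⟨⟨?_, ⟨m, Finset.mem_insert_self m τ⟩, ?_⟩, ⟨m, Finset.mem_insert_self m τ⟩, ?_⟩
    · intro x hx
      rcases Finset.mem_insert.1 hx with rfl | hx
      · exact Finset.mem_Icc.2 ⟨hm0, hmN⟩
      · have := hτb x hx; rw [Finset.mem_Icc]; omega
    · intro a ha b hb
      have ha' : a ≤ m + d := by
        rcases Finset.mem_insert.1 ha with rfl | ha
        · omega
        · exact (hτb a ha).2.1
      have hb' : m ≤ b := by
        rcases Finset.mem_insert.1 hb with rfl | hb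
        · omega
        · have := hτb b hb; omega
      omega
    · rcases hcond with h | ⟨x, hx⟩
      · exact ⟨m, Finset.mem_inter.2 ⟨Finset.mem_insert_self m τ,
          Finset.mem_Icc.2 ⟨h, hmN⟩⟩⟩
      · rw [Finset.mem_inter] at hx
        exact ⟨x, Finset.mem_inter.2 ⟨Finset.mem_insert_of_mem hx.1, hx.2⟩⟩

lemma Fm_disjoint (d N iS : ℕ) {m m' : ℕ} (h : m ≠ m') :
    Disjoint (Fm d N iS m) (Fm d N iS m') := by
  rw [Finset.disjoint_left]
  intro σ h1 h2
  rw [Fm, Finset.mem_image] at h1 h2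
  obtain ⟨τ, hτ, rfl⟩ := h1
  obtain ⟨τ', hτ', heq⟩ := h2
  rw [Finset.mem_filter, Finset.mem_powerset] at hτ hτ'
  have hm : m ∈ insert m' τ' := heq ▸ Finset.mem_insert_self m τ
  have hm' : m' ∈ insert m τ := heq ▸ Finset.mem_insert_self m' τ'
  rcases Finset.mem_insert.1 hm with h1 | h1
  · exact h h1
  · have hx := Finset.mem_Icc.1 (hτ'.1 h1)
    rcases Finset.mem_insert.1 hm' with h2 | h2
    · omega
    · have := Finset.mem_Icc.1 (hτ.1 h2); omega

lemma geom_Ioc (a b : ℕ) (h : a ≤ b) :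
    ∑ m ∈ Finset.Ioc a b, (2:ℤ)^(b-m) = 2^(b-a) - 1 := by
  induction b, h using Nat.le_induction with
  | base => simp
  | succ b hab ih =>
    rw [Finset.sum_Ioc_succ_top (by omega)]
    have : ∀ m ∈ Finset.Ioc a b, (2:ℤ)^(b+1-m) = 2 * 2^(b-m) := by
      intro m hm
      simp only [Finset.mem_Ioc] at hm
      rw [show b+1-m = (b-m)+1 by omega, pow_succ]; ring
    rw [Finset.sum_congr rfl this, ← Finset.mul_sum, ih,
      show b+1-(b+1) = 0 by omega, show b+1-a = (b-a)+1 by omega, pow_succ]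
    ring

lemma main_sum (d e2 e3 N : ℕ) (hd : 1 ≤ d) (h1 : d ≤ e2) (h23 : e2 ≤ e3) (hN : e3 + d = N) :
    ∑ m ∈ Finset.Ioc 0 N, ((Fm d N (e2+1) m).card : ℤ) = ((N:ℤ) - e2) * 2^d := by
  have he3N : e3 ≤ N := by omega
  have seg1 : ∀ m ∈ Finset.Ioc 0 (e2 - d), ((Fm d N (e2+1) m).card : ℤ) = 0 := by
    intro m hm
    rw [Finset.mem_Ioc] at hm
    rw [card_Fm, if_neg (by omega)]
    have hmin : min (m+d) N = m + d := by omega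
    have hsd : (Finset.Icc (m+1) (m+d)) \ Finset.Icc (e2+1) N
        = Finset.Icc (m+1) (m+d) := by
      ext x; simp only [Finset.mem_sdiff, Finset.mem_Icc]; omega
    rw [hmin, hsd, Nat.card_Icc, show m+d+1-(m+1) = d by omega]
    simp
  have seg2 : ∀ m ∈ Finset.Ioc (e2-d) e2,
      ((Fm d N (e2+1) m).card : ℤ) = 2^d - 2^(e2-m) := by
    intro m hm
    rw [Finset.mem_Ioc] at hm
    rw [card_Fm, if_neg (by omega)]
    have hmin : min (m+d) N = m + d := by omega
    have hsd : (Finset.Icc (m+1) (m+d)) \ Finset.Icc (e2+1) N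
        = Finset.Icc (m+1) e2 := by
      ext x; simp only [Finset.mem_sdiff, Finset.mem_Icc]; omega
    rw [hmin, hsd, Nat.card_Icc, Nat.card_Icc, show m+d+1-(m+1) = d by omega,
      show e2+1-(m+1) = e2-m by omega]
    have hle : 2^(e2-m) ≤ 2^d := Nat.pow_le_pow_right (by norm_num) (by omega)
    push_cast [Nat.cast_sub hle]
    ring
  have seg3 : ∀ m ∈ Finset.Ioc e2 e3, ((Fm d N (e2+1) m).card : ℤ) = 2^d := by
    intro m hm
    rw [Finset.mem_Ioc] at hm
    rw [card_Fm, if_pos (by omega)]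
    have hmin : min (m+d) N = m + d := by omega
    rw [hmin, Nat.card_Icc, show m+d+1-(m+1) = d by omega]
    push_cast; ring
  have seg4 : ∀ m ∈ Finset.Ioc e3 N, ((Fm d N (e2+1) m).card : ℤ) = 2^(N-m) := by
    intro m hm
    rw [Finset.mem_Ioc] at hm
    rw [card_Fm, if_pos (by omega)]
    have hmin : min (m+d) N = N := by omega
    rw [hmin, Nat.card_Icc, show N+1-(m+1) = N-m by omega]
    push_cast; ring
  rw [← Finset.sum_Ioc_consecutive _ (by omega : 0 ≤ e3) (by omega : e3 ≤ N),
    ← Finset.sum_Ioc_consecutive _ (by omega : 0 ≤ e2) (by omega : e2 ≤ e3),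
    ← Finset.sum_Ioc_consecutive _ (by omega : 0 ≤ e2 - d) (by omega : e2 - d ≤ e2)]
  rw [Finset.sum_congr rfl seg1, Finset.sum_congr rfl seg2, Finset.sum_congr rfl seg3,
    Finset.sum_congr rfl seg4]
  rw [Finset.sum_sub_distrib, geom_Ioc _ _ (by omega), geom_Ioc _ _ (by omega)]
  simp only [Finset.sum_const, Nat.card_Ioc, nsmul_eq_mul, Finset.sum_const_zero]
  rw [show e2 - (e2 - d) = d by omega, show N - e3 = d by omega]
  push_cast [show d ≤ e2 from h1, show e2 ≤ e3 from h23]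
  have : (N:ℤ) = e3 + d := by exact_mod_cast hN.symm
  rw [this]
  ring

lemma card_filter_Bk (d Q i v t : ℕ) (hd : 1 ≤ d) (hv : d*(Q+1) < v) (ht : t ≤ Q) :
    (((sigmaB d t).powerset.image (insert v)).filter
        (fun σ => σ.Nonempty ∧ (σ ∩ Finset.Icc (i*d+1) (d*(Q+1))).Nonempty)).card
      = if i ≤ t then 2^d - 1 else 0 := by
  set N := d*(Q+1) with hN
  have hsig : ∀ x ∈ sigmaB d t, t*d + 1 ≤ x ∧ x ≤ t*d + d := by
    intro x hx
    rw [sigmaB, Finset.mem_Icc] at hx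
    have : (t+1)*d = t*d + d := by ring
    omega
  have htd : t*d + d ≤ N := by
    have h1 : (t+1)*d ≤ (Q+1)*d := Nat.mul_le_mul_right d (by omega)
    have h2 : (t+1)*d = t*d+d := by ring
    have h3 : (Q+1)*d = N := by rw [hN]; ring
    omega
  rw [Finset.filter_image]
  rw [Finset.card_image_of_injOn (insert_injOn' v (sigmaB d t)
      (fun hc => by have := hsig v hc; omega) _
      (fun τ hτ => by simpa using (Finset.mem_filter.1 hτ).1))]
  have hvS : v ∉ Finset.Icc (i*d+1) N := by rw [Finset.mem_Icc]; omega
  have hcong : ∀ τ ∈ (sigmaB d t).powerset,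
      ((insert v τ).Nonempty ∧ ((insert v τ) ∩ Finset.Icc (i*d+1) N).Nonempty)
        ↔ (τ ∩ Finset.Icc (i*d+1) N).Nonempty := by
    intro τ _
    constructor
    · rintro ⟨-, x, hx⟩
      rw [Finset.mem_inter, Finset.mem_insert] at hx
      rcases hx.1 with rfl | h
      · exact absurd hx.2 hvS
      · exact ⟨x, Finset.mem_inter.2 ⟨h, hx.2⟩⟩
    · rintro ⟨x, hx⟩
      rw [Finset.mem_inter] at hx
      exact ⟨⟨v, Finset.mem_insert_self v τ⟩,
        ⟨x, Finset.mem_inter.2 ⟨Finset.mem_insert_of_mem hx.1, hx.2⟩⟩⟩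
  rw [Finset.filter_congr hcong, card_powerset_filter_inter]
  have hcard : (sigmaB d t).card = d := by
    rw [sigmaB, Nat.card_Icc]
    have : (t+1)*d = t*d + d := by ring
    omega
  by_cases h : i ≤ t
  · rw [if_pos h]
    have hsub : sigmaB d t \ Finset.Icc (i*d+1) N = ∅ := by
      rw [Finset.sdiff_eq_empty_iff_subset]
      intro x hx
      have h1 := hsig x hx
      have h2 : i*d ≤ t*d := Nat.mul_le_mul_right d h
      rw [Finset.mem_Icc]
      omega
    rw [hsub, hcard]
    simp
  · rw [if_neg h]
    have hsub : sigmaB d t \ Finset.Icc (i*d+1) N = sigmaB d t := by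
      rw [Finset.sdiff_eq_self_iff_disjoint, Finset.disjoint_left]
      intro x hx hx'
      have h1 := hsig x hx
      have h2 : t*d + d ≤ i*d := by
        have h4 : (t+1)*d ≤ i*d := Nat.mul_le_mul_right d (by omega)
        have h3 : (t+1)*d = t*d + d := by ring
        omega
      rw [Finset.mem_Icc] at hx'
      omega
    rw [hsub, hcard]
    omega

lemma target_le_Q (Q r k : ℕ) (hr0 : 0 < r) (hrQ : r < Q) (hk : k < r) :
    target Q r k ≤ Q := by
  rw [target, Nat.mod_eq_of_lt hrQ, if_pos hk]
  have h1 : (k+1)*Q + r - 1 ≤ r*Q + (r-1) := by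
    have : (k+1)*Q ≤ r*Q := Nat.mul_le_mul_right Q (by omega)
    omega
  calc ((k+1)*Q + r - 1) / r ≤ (r*Q + (r-1)) / r := Nat.div_le_div_right h1
    _ = Q := by rw [Nat.mul_add_div hr0, Nat.div_eq_of_lt (by omega)]; omega

lemma Lfun_eq (Q r i : ℕ) (hr0 : 0 < r) (hrQ : r < Q) :
    Lfun Q r i Q = ((Finset.range r).filter (fun k => i ≤ target Q r k)).card := by
  set g : ℕ → ℕ := fun j => (j*Q + r - 1)/r with hg
  have hmono : ∀ j, g j + 1 ≤ g (j+1) := by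
    intro j
    have h1 : (j+1)*Q + r - 1 = (j*Q + r - 1) + Q := by
      have : (j+1)*Q = j*Q + Q := by ring
      omega
    have h2 : (j*Q + r - 1 + r)/r = (j*Q + r - 1)/r + 1 := Nat.add_div_right _ hr0
    have h3 : (j*Q + r - 1 + r)/r ≤ ((j*Q + r - 1) + Q)/r :=
      Nat.div_le_div_right (by omega)
    simp only [hg, h1]
    omega
  have hsm : StrictMono g := strictMono_nat_of_lt_succ (fun n => by have := hmono n; omega)
  have hgr : g r = Q := by
    simp only [hg]
    rw [show r*Q + r - 1 = r*Q + (r-1) by omega,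
      Nat.mul_add_div hr0, Nat.div_eq_of_lt (by omega)]
    omega
  have hgle : ∀ j ≤ r, g j ≤ Q := fun j hj => hgr ▸ hsm.monotone hj
  have htar : ∀ k < r, target Q r k = g (k+1) := by
    intro k hk
    rw [target, Nat.mod_eq_of_lt hrQ, if_pos hk]
  have himg : Finset.Icc i Q ∩ (Finset.Icc 1 r).image g
      = ((Finset.Icc 1 r).filter (fun j => i ≤ g j)).image g := by
    ext x
    simp only [Finset.mem_inter, Finset.mem_image, Finset.mem_Icc, Finset.mem_filter]
    constructor
    · rintro ⟨⟨hix, -⟩, j, hj, rfl⟩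
      exact ⟨j, ⟨hj, hix⟩, rfl⟩
    · rintro ⟨j, ⟨hj, hij⟩, rfl⟩
      exact ⟨⟨hij, hgle j hj.2⟩, j, hj, rfl⟩
  rw [Lfun, himg, Finset.card_image_of_injOn (hsm.injective.injOn)]
  apply Finset.card_nbij' (fun j => j - 1) (fun k => k + 1)
  · intro j hj
    simp only [Finset.coe_filter, Set.mem_setOf_eq, Finset.mem_filter, Finset.mem_Icc] at hj
    simp only [Finset.coe_filter, Set.mem_setOf_eq, Finset.mem_filter, Finset.mem_range]
    rw [htar (j-1) (by omega), show j - 1 + 1 = j by omega]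
    exact ⟨by omega, hj.2⟩
  · intro k hk
    simp only [Finset.coe_filter, Set.mem_setOf_eq, Finset.mem_filter, Finset.mem_range] at hk
    simp only [Finset.coe_filter, Set.mem_setOf_eq, Finset.mem_filter, Finset.mem_Icc]
    rw [htar k hk.1] at hk
    exact ⟨⟨by omega, by omega⟩, hk.2⟩
  · intro j hj
    simp only [Finset.coe_filter, Set.mem_setOf_eq, Finset.mem_filter, Finset.mem_Icc] at hj
    dsimp only
    omega
  · intro k _
    dsimp only
    omega

/-- **Density formula, case `j = Q`.** -/
theorem Tr_density_suffix (d Q r : ℕ) (hd : 1 ≤ d) (hQ : 1 ≤ Q)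
    (hr0 : 0 < r) (hrQ : r < Q) (i : ℕ) (hi : 1 ≤ i) (hiQ : i ≤ Q) :
    dens (Tr d Q r) ((Finset.Icc i Q).biUnion (sigmaB d)) =
      2 ^ d + ((2 : ℝ) ^ d - 1) * (Lfun Q r i Q : ℝ) /
        ((d : ℝ) * ((Q : ℝ) - (i : ℝ) + 1)) := by
  have hS : (Finset.Icc i Q).biUnion (sigmaB d) = Finset.Icc (i*d+1) (d*(Q+1)) := by
    ext x
    simp only [Finset.mem_biUnion, Finset.mem_Icc, sigmaB]
    constructor
    · rintro ⟨m, ⟨him, hmQ⟩, hx1, hx2⟩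
      have h1 : i * d ≤ m * d := Nat.mul_le_mul_right d him
      have h2 : (m+1) * d ≤ (Q+1) * d := Nat.mul_le_mul_right d (by omega)
      constructor
      · omega
      · calc x ≤ (m+1)*d := hx2
          _ ≤ (Q+1)*d := h2
          _ = d*(Q+1) := Nat.mul_comm _ _
    · rintro ⟨h1, h2⟩
      refine ⟨(x-1)/d, ⟨?_, ?_⟩, ?_, ?_⟩
      · exact Nat.le_div_iff_mul_le (by omega) |>.2 (by omega)
      · have : (x-1)/d < Q + 1 := (Nat.div_lt_iff_lt_mul (by omega)).2 (by
          have : d * (Q+1) = (Q+1) * d := Nat.mul_comm _ _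
          omega)
        omega
      · have := Nat.div_mul_le_self (x-1) d
        omega
      · have : (x-1) < ((x-1)/d + 1) * d := (Nat.div_lt_iff_lt_mul (by omega)).1 (by omega)
        omega
  rw [hS]
  have hprod : i*d + d*(Q-i+1) = d*(Q+1) := by
    rw [Nat.mul_comm i d, ← Nat.mul_add]
    congr 1
    omega
  have hScard : (Finset.Icc (i*d+1) (d*(Q+1))).card = d*(Q-i+1) := by
    rw [Nat.card_Icc]
    omega
  have hroot_big : ∀ k, d*(Q+1) < rootVtx d Q k := by
    intro k; rw [rootVtx]; omega
  have hE : (eCount (Tr d Q r) (Finset.Icc (i*d+1) (d*(Q+1))) : ℤ)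
      = (d*(Q-i+1) : ℕ) * 2^d + ((2:ℤ)^d - 1) * (Lfun Q r i Q : ℤ) := by
    rw [eCount, Tr, Finset.filter_union, Finset.filter_biUnion]
    have hBk_mem : ∀ k σ, σ ∈ ((sigmaB d (target Q r k)).powerset.image
        (insert (rootVtx d Q k))) → rootVtx d Q k ∈ σ := by
      intro k σ hσ
      rw [Finset.mem_image] at hσ
      obtain ⟨τ, -, rfl⟩ := hσ
      exact Finset.mem_insert_self _ _
    have hBk_sub : ∀ k, k < r → ∀ σ, σ ∈ ((sigmaB d (target Q r k)).powerset.image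
        (insert (rootVtx d Q k))) → ∀ x ∈ σ, x ≤ d*(Q+1) ∨ x = rootVtx d Q k := by
      intro k hk σ hσ x hx
      rw [Finset.mem_image] at hσ
      obtain ⟨τ, hτ, rfl⟩ := hσ
      rw [Finset.mem_powerset] at hτ
      rcases Finset.mem_insert.1 hx with rfl | hx
      · right; rfl
      · left
        have hx' := hτ hx
        rw [sigmaB, Finset.mem_Icc] at hx'
        have h1 : (target Q r k + 1)*d ≤ (Q+1)*d :=
          Nat.mul_le_mul_right d (by have := target_le_Q Q r k hr0 hrQ hk; omega)
        have h2 : (Q+1)*d = d*(Q+1) := Nat.mul_comm _ _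
        omega
    have hdisj : Disjoint ((T0 d Q).filter
        (fun σ => σ.Nonempty ∧ (σ ∩ Finset.Icc (i*d+1) (d*(Q+1))).Nonempty))
        ((Finset.range r).biUnion (fun k => (((sigmaB d (target Q r k)).powerset.image
          (insert (rootVtx d Q k))).filter
            (fun σ => σ.Nonempty ∧ (σ ∩ Finset.Icc (i*d+1) (d*(Q+1))).Nonempty)))) := by
      rw [Finset.disjoint_left]
      intro σ h1 h2
      rw [Finset.mem_biUnion] at h2
      obtain ⟨k, -, h2⟩ := h2
      have hv : rootVtx d Q k ∈ σ := hBk_mem k σ (Finset.mem_of_mem_filter σ h2)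
      have h1' := Finset.mem_of_mem_filter σ h1
      rw [T0, Finset.mem_filter, Finset.mem_powerset] at h1'
      have := Finset.mem_Icc.1 (h1'.1 hv)
      have := hroot_big k
      omega
    have hpair : ∀ k ∈ Finset.range r, ∀ k' ∈ Finset.range r, k ≠ k' →
        Disjoint (((sigmaB d (target Q r k)).powerset.image
          (insert (rootVtx d Q k))).filter
            (fun σ => σ.Nonempty ∧ (σ ∩ Finset.Icc (i*d+1) (d*(Q+1))).Nonempty))
        (((sigmaB d (target Q r k')).powerset.image
          (insert (rootVtx d Q k'))).filter
            (fun σ => σ.Nonempty ∧ (σ ∩ Finset.Icc (i*d+1) (d*(Q+1))).Nonempty)) := by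
      intro k hk k' hk' hkk'
      rw [Finset.mem_range] at hk hk'
      rw [Finset.disjoint_left]
      intro σ h1 h2
      have hv : rootVtx d Q k ∈ σ := hBk_mem k σ (Finset.mem_of_mem_filter σ h1)
      have := hBk_sub k' hk' σ (Finset.mem_of_mem_filter σ h2) _ hv
      have := hroot_big k
      rw [rootVtx, rootVtx] at *
      omega
    have hT0 : ((((T0 d Q).filter
        (fun σ => σ.Nonempty ∧ (σ ∩ Finset.Icc (i*d+1) (d*(Q+1))).Nonempty)).card : ℤ))
        = (d*(Q-i+1) : ℕ) * 2^d := by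
      rw [T0_filter_eq d Q (i*d+1),
        Finset.card_biUnion (fun m _ m' _ h => Fm_disjoint d (d*(Q+1)) (i*d+1) h),
        Nat.cast_sum,
        main_sum d (i*d) (Q*d) (d*(Q+1)) hd
          (by calc d = 1*d := (Nat.one_mul d).symm
                _ ≤ i*d := Nat.mul_le_mul_right d hi)
          (Nat.mul_le_mul_right d hiQ)
          (by ring)]
      congr 1
      rw [← hprod]
      push_cast
      ring
    have hroot : ∀ k ∈ Finset.range r,
        ((((sigmaB d (target Q r k)).powerset.image
          (insert (rootVtx d Q k))).filter
            (fun σ => σ.Nonempty ∧ (σ ∩ Finset.Icc (i*d+1) (d*(Q+1))).Nonempty)).card)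
        = if i ≤ target Q r k then 2^d - 1 else 0 := by
      intro k hk
      rw [Finset.mem_range] at hk
      exact card_filter_Bk d Q i (rootVtx d Q k) (target Q r k) hd (hroot_big k)
        (target_le_Q Q r k hr0 hrQ hk)
    have hsum : (∑ k ∈ Finset.range r, (((sigmaB d (target Q r k)).powerset.image
          (insert (rootVtx d Q k))).filter
            (fun σ => σ.Nonempty ∧ (σ ∩ Finset.Icc (i*d+1) (d*(Q+1))).Nonempty)).card)
        = (2^d - 1) * Lfun Q r i Q := by
      rw [Finset.sum_congr rfl hroot, ← Finset.sum_filter, Finset.sum_const, smul_eq_mul,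
        ← Lfun_eq Q r i hr0 hrQ]
      exact Nat.mul_comm _ _
    rw [Finset.card_union_of_disjoint hdisj, Finset.card_biUnion hpair, hsum,
      Nat.cast_add, hT0]
    have h2d : (1:ℕ) ≤ 2^d := Nat.one_le_two_pow
    push_cast [Nat.cast_sub h2d]
    ring
  have hEr : (eCount (Tr d Q r) (Finset.Icc (i*d+1) (d*(Q+1))) : ℝ)
      = ((d*(Q-i+1) : ℕ) : ℝ) * 2^d + ((2:ℝ)^d - 1) * (Lfun Q r i Q : ℝ) := by
    exact_mod_cast congrArg (fun z : ℤ => (z : ℝ)) hE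
  rw [dens, hScard, hEr]
  have hcast : ((d*(Q-i+1) : ℕ) : ℝ) = (d:ℝ) * ((Q:ℝ) - (i:ℝ) + 1) := by
    push_cast [Nat.cast_sub hiQ]
    ring
  rw [hcast]
  have hiQ' : (i:ℝ) ≤ (Q:ℝ) := Nat.cast_le.2 hiQ
  have hd' : (1:ℝ) ≤ (d:ℝ) := by exact_mod_cast hd
  have hpos : (0:ℝ) < (d:ℝ) * ((Q:ℝ) - (i:ℝ) + 1) := by
    apply mul_pos
    · linarith
    · linarith
  have hne : (Q:ℝ) - (i:ℝ) + 1 ≠ 0 := by linarith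
  field_simp
end

section
/- Let d, Q ≥ 1 and 0 < r < Q be integers, and for 1 ≤ i ≤ j ≤ Q let L[i,j] = |{i, i+1, …, j} ∩ {⌈Q/r⌉, ⌈2Q/r⌉, …, ⌈(r−1)Q/r⌉, Q}|. Then for every 1 ≤ i ≤ j < Q, the set S = σ_i ∪ σ_{i+1} ∪ … ∪ σ_j satisfies dens_{T_r}(S) = 2^d + ( (2^d − 1)·L[i,j] + (d−1)·2^d + 1 ) / (d(j − i + 1)). -/
open Finset hiding dens


def cnt (d a b : ℕ) : ℕ :=
  (((Finset.Icc a b).powerset.filter (fun σ => σ.Nonempty ∧ ∀ x ∈ σ, ∀ y ∈ σ, x ≤ y + d))).card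

lemma cnt_base (d a : ℕ) (hd : 1 ≤ d) : cnt d a (a + d - 1) = 2 ^ d - 1 := by
  unfold cnt
  have h1 : ((Icc a (a + d - 1)).powerset.filter
      (fun σ => σ.Nonempty ∧ ∀ x ∈ σ, ∀ y ∈ σ, x ≤ y + d)) =
      (Icc a (a + d - 1)).powerset.filter (fun σ => σ.Nonempty) := by
    apply filter_congr
    intro σ hσ
    simp only [mem_powerset] at hσ
    simp only [and_iff_left_iff_imp]
    intro _ x hx y hy
    have := hσ hx; have := hσ hy
    simp only [mem_Icc] at *
    omega
  rw [h1]
  have h2 : (Icc a (a + d - 1)).powerset.filter (fun σ => σ.Nonempty) =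
      (Icc a (a + d - 1)).powerset.erase ∅ := by
    ext σ
    simp [Finset.nonempty_iff_ne_empty, and_comm]
  rw [h2, card_erase_of_mem (by simp), card_powerset, Nat.card_Icc]
  have : a + d - 1 + 1 - a = d := by omega
  rw [this]

lemma cnt_step (d a b : ℕ) (hd : 1 ≤ d) (ha : 1 ≤ a) (hb : a + d - 1 ≤ b) :
    cnt d a (b + 1) = cnt d a b + 2 ^ d := by
  unfold cnt
  classical
  have hsplit := Finset.card_filter_add_card_filter_not
    (s := (Icc a (b + 1)).powerset.filter
      (fun σ => σ.Nonempty ∧ ∀ x ∈ σ, ∀ y ∈ σ, x ≤ y + d))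
    (p := fun σ => (b + 1) ∈ σ)
  have e1 : ((Icc a (b + 1)).powerset.filter (fun σ => σ.Nonempty ∧ ∀ x ∈ σ, ∀ y ∈ σ, x ≤ y + d)).filter (fun σ => ¬ (b+1) ∈ σ) =
      (Icc a b).powerset.filter (fun σ => σ.Nonempty ∧ ∀ x ∈ σ, ∀ y ∈ σ, x ≤ y + d) := by
    ext σ
    simp only [mem_filter, mem_powerset]
    constructor
    · rintro ⟨⟨hsub, hpσ⟩, hnot⟩
      refine ⟨?_, hpσ⟩
      intro x hx
      have := hsub hx
      simp only [mem_Icc] at *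
      rcases Nat.lt_or_ge x (b+1) with h | h
      · omega
      · exfalso; have : x = b + 1 := by omega
        exact hnot (this ▸ hx)
    · rintro ⟨hsub, hpσ⟩
      have hsub' : σ ⊆ Icc a (b+1) := hsub.trans (Icc_subset_Icc_right (by omega))
      refine ⟨⟨hsub', hpσ⟩, fun hmem => ?_⟩
      have := hsub hmem
      simp only [mem_Icc] at this
      omega
  have e2 : ((Icc a (b + 1)).powerset.filter (fun σ => σ.Nonempty ∧ ∀ x ∈ σ, ∀ y ∈ σ, x ≤ y + d)).filter (fun σ => (b+1) ∈ σ) =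
      (Icc (b + 1 - d) b).powerset.image (insert (b + 1)) := by
    ext σ
    simp only [mem_filter, mem_powerset, mem_image]
    constructor
    · rintro ⟨⟨hsub, hne, hsp⟩, hmem⟩
      refine ⟨σ.erase (b+1), ?_, ?_⟩
      · intro x hx
        have hxne := (mem_erase.mp hx).1
        have hxσ := (mem_erase.mp hx).2
        have h1 := hsub hxσ
        have h2 := hsp (b+1) hmem x hxσ
        simp only [mem_Icc] at *
        omega
      · exact insert_erase hmem
    · rintro ⟨τ, hτ, rfl⟩
      have hτ' : ∀ x ∈ τ, b + 1 - d ≤ x ∧ x ≤ b := by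
        intro x hx; have := hτ hx; simpa using this
      refine ⟨⟨?_, ⟨b+1, mem_insert_self _ _⟩, ?_⟩, mem_insert_self _ _⟩
      · intro x hx
        rcases mem_insert.mp hx with rfl | hx
        · simp; omega
        · have := hτ' x hx; simp only [mem_Icc]; omega
      · intro x hx y hy
        rcases mem_insert.mp hx with rfl | hx <;> rcases mem_insert.mp hy with rfl | hy
        · omega
        · have := hτ' y hy; omega
        · have := hτ' x hx; omega
        · have := hτ' x hx; have := hτ' y hy; omega
  have hcard2 : ((Icc (b + 1 - d) b).powerset.image (insert (b + 1))).card = 2 ^ d := by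
    rw [card_image_of_injOn, card_powerset, Nat.card_Icc]
    · congr 1; omega
    · intro s hs t ht hst
      simp only [coe_powerset, Set.mem_preimage, Set.mem_powerset_iff, mem_coe] at hs ht
      have hbs : (b+1) ∉ s := fun h => by
        have := hs h; simp only [mem_coe, mem_Icc] at this; omega
      have hbt : (b+1) ∉ t := fun h => by
        have := ht h; simp only [mem_coe, mem_Icc] at this; omega
      have := congrArg (fun u => Finset.erase u (b+1)) hst
      simpa [Finset.erase_insert hbs, Finset.erase_insert hbt] using this
  rw [e1, e2, hcard2] at hsplit
  omega

lemma cnt_formula (d a n : ℕ) (hd : 1 ≤ d) (ha : 1 ≤ a) :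
    cnt d a (a + d - 1 + n) = n * 2 ^ d + (2 ^ d - 1) := by
  induction n with
  | zero => simpa using cnt_base d a hd
  | succ n ih =>
      have : a + d - 1 + (n + 1) = (a + d - 1 + n) + 1 := by omega
      rw [this, cnt_step d a _ hd ha (by omega), ih]
      ring

lemma biUnion_sigmaB (d i j : ℕ) (hd : 1 ≤ d) (hij : i ≤ j) :
    (Finset.Icc i j).biUnion (sigmaB d) = Finset.Icc (i * d + 1) ((j + 1) * d) := by
  ext x
  simp only [mem_biUnion, mem_Icc, sigmaB]
  constructor
  · rintro ⟨t, ⟨h1, h2⟩, h3, h4⟩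
    constructor
    · calc i * d + 1 ≤ t * d + 1 := by
            have := Nat.mul_le_mul_right d h1; omega
        _ ≤ x := h3
    · calc x ≤ (t + 1) * d := h4
        _ ≤ (j + 1) * d := Nat.mul_le_mul_right d (by omega)
  · rintro ⟨h1, h2⟩
    refine ⟨(x - 1) / d, ⟨?_, ?_⟩, ?_, ?_⟩
    · exact Nat.le_div_iff_mul_le (by omega) |>.mpr (by omega)
    · have h := (Nat.div_lt_iff_lt_mul (show 0 < d by omega)
        (x := x - 1) (y := j + 1)).mpr (by omega)
      omega
    · have := Nat.div_mul_le_self (x - 1) d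
      omega
    · have h := (Nat.div_lt_iff_lt_mul (show 0 < d by omega)
        (x := x - 1) (y := (x - 1) / d + 1)).mp (Nat.lt_succ_self _)
      omega

lemma eT0_card (d Q i j : ℕ) (hd : 1 ≤ d) (hi : 1 ≤ i) (hij : i ≤ j) (hjQ : j < Q) :
    eCount (T0 d Q) (Finset.Icc (i * d + 1) ((j + 1) * d))
      + (cnt d 1 (i * d) + cnt d ((j + 1) * d + 1) (d * (Q + 1)))
      = cnt d 1 (d * (Q + 1)) := by
  classical
  set N := d * (Q + 1) with hN
  set A := i * d with hA
  set B := (j + 1) * d with hB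
  set S := Finset.Icc (A + 1) B with hS
  have hAB : A + 1 ≤ B := by
    have := Nat.mul_le_mul_right d (show i + 1 ≤ j + 1 by omega)
    have hd' := Nat.mul_le_mul_left i (show 1 ≤ d from hd)
    simp only [hA, hB]
    calc i * d + 1 ≤ i * d + d := by omega
      _ = (i + 1) * d := by ring
      _ ≤ (j + 1) * d := Nat.mul_le_mul_right d (by omega)
  have hBN : B + 1 ≤ N := by
    simp only [hB, hN]
    have : (j + 1) * d + 1 ≤ (Q + 1) * d := by
      calc (j + 1) * d + 1 ≤ Q * d + 1 := by
            have := Nat.mul_le_mul_right d (show j + 1 ≤ Q by omega); omega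
        _ ≤ (Q + 1) * d := by nlinarith
    rw [Nat.mul_comm d (Q + 1)]
    exact this
  have hAN : A ≤ N := by omega
  have hBd : A + 1 ≤ B + 1 - d := by
    have : B = (j + 1) * d := hB
    have h1 : i * d + d ≤ (j + 1) * d := by
      calc i * d + d = (i + 1) * d := by ring
        _ ≤ (j + 1) * d := Nat.mul_le_mul_right d (by omega)
    omega
  set P : Finset ℕ → Prop := fun σ => σ.Nonempty ∧ ∀ x ∈ σ, ∀ y ∈ σ, x ≤ y + d with hP
  have key : ∀ σ : Finset ℕ, P σ → ¬(σ ∩ S).Nonempty →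
      (σ ⊆ Finset.Icc 1 N → σ ⊆ Finset.Icc 1 A ∨ σ ⊆ Finset.Icc (B + 1) N) := by
    intro σ hPσ hno hsub
    have hnotin : ∀ x ∈ σ, x ≤ A ∨ B + 1 ≤ x := by
      intro x hx
      by_contra hcon
      push_neg at hcon
      exact hno ⟨x, mem_inter.mpr ⟨hx, by simp only [hS, mem_Icc]; omega⟩⟩
    by_cases hhigh : ∃ x ∈ σ, B + 1 ≤ x
    · right
      obtain ⟨x, hx, hxB⟩ := hhigh
      intro y hy
      have h1 := hPσ.2 x hx y hy
      have h2 := hnotin y hy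
      have h3 := hsub hy
      simp only [mem_Icc] at *
      omega
    · left
      push_neg at hhigh
      intro y hy
      have := hnotin y hy
      have h3 := hsub hy
      have := hhigh y hy
      simp only [mem_Icc] at *
      omega
  have hsplit := Finset.card_filter_add_card_filter_not
    (s := (Finset.Icc 1 N).powerset.filter P)
    (p := fun σ => (σ ∩ S).Nonempty)
  have e1 : ((Finset.Icc 1 N).powerset.filter P).filter (fun σ => (σ ∩ S).Nonempty)
      = (T0 d Q).filter (fun σ => σ.Nonempty ∧ (σ ∩ S).Nonempty) := by
    unfold T0
    rw [filter_filter, filter_filter]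
    apply filter_congr
    intro σ hσ
    simp only [hP]
    tauto
  have e2 : ((Finset.Icc 1 N).powerset.filter P).filter (fun σ => ¬(σ ∩ S).Nonempty)
      = (Finset.Icc 1 A).powerset.filter P ∪ (Finset.Icc (B + 1) N).powerset.filter P := by
    ext σ
    simp only [mem_union, mem_filter, mem_powerset]
    constructor
    · rintro ⟨⟨hsub, hPσ⟩, hno⟩
      rcases key σ hPσ hno hsub with h | h
      · exact Or.inl ⟨h, hPσ⟩
      · exact Or.inr ⟨h, hPσ⟩
    · rintro (⟨hsub, hPσ⟩ | ⟨hsub, hPσ⟩)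
      · refine ⟨⟨hsub.trans (Icc_subset_Icc_right hAN), hPσ⟩, ?_⟩
        rintro ⟨x, hx⟩
        rw [mem_inter] at hx
        have := hsub hx.1
        have := hx.2
        simp only [hS, mem_Icc] at *
        omega
      · refine ⟨⟨hsub.trans (Icc_subset_Icc_left (by omega)), hPσ⟩, ?_⟩
        rintro ⟨x, hx⟩
        rw [mem_inter] at hx
        have := hsub hx.1
        have := hx.2
        simp only [hS, mem_Icc] at *
        omega
  have hdisj : Disjoint ((Finset.Icc 1 A).powerset.filter P)
      ((Finset.Icc (B + 1) N).powerset.filter P) := by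
    rw [disjoint_left]
    intro σ h1 h2
    simp only [mem_filter, mem_powerset] at h1 h2
    obtain ⟨x, hx⟩ := h1.2.1
    have := h1.1 hx
    have := h2.1 hx
    simp only [mem_Icc] at *
    omega
  rw [e1, e2, card_union_of_disjoint hdisj] at hsplit
  unfold eCount cnt
  simp only [hP] at hsplit
  omega

lemma target_eq (Q r k : ℕ) (hrQ : r < Q) (hk : k < r) :
    target Q r k = ((k + 1) * Q + r - 1) / r := by
  unfold target
  rw [Nat.mod_eq_of_lt hrQ, if_pos hk]

lemma target_le (Q r k : ℕ) (hrQ : r < Q) (hk : k < r) : target Q r k ≤ Q := by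
  rw [target_eq Q r k hrQ hk]
  have hr0 : 0 < r := by omega
  have h1 : (k + 1) * Q ≤ r * Q := Nat.mul_le_mul_right Q (by omega)
  have h2 : (Q + 1) * r = r * Q + r := by ring
  have := (Nat.div_lt_iff_lt_mul hr0 (x := (k + 1) * Q + r - 1) (y := Q + 1)).mpr (by omega)
  omega

lemma att_card (d Q r i j k : ℕ) (hd : 1 ≤ d) (hrQ : r < Q) (hk : k < r) (hjQ : j ≤ Q) :
    (((sigmaB d (target Q r k)).powerset.image (insert (rootVtx d Q k))).filter
      (fun σ => σ.Nonempty ∧ (σ ∩ Finset.Icc (i * d + 1) ((j + 1) * d)).Nonempty)).card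
    = if target Q r k ∈ Finset.Icc i j then 2 ^ d - 1 else 0 := by
  classical
  set t := target Q r k with hT
  set v := rootVtx d Q k with hV
  have htQ : t ≤ Q := target_le Q r k hrQ hk
  have hvbig : d * (Q + 1) < v := by simp [hV, rootVtx]
  have hQd : (Q + 1) * d ≤ d * (Q + 1) := by rw [Nat.mul_comm]
  have hvS : v ∉ Finset.Icc (i * d + 1) ((j + 1) * d) := by
    simp only [mem_Icc]
    intro h
    have : (j + 1) * d ≤ (Q + 1) * d := Nat.mul_le_mul_right d (by omega)
    omega
  have hvnotin : ∀ τ : Finset ℕ, τ ⊆ sigmaB d t → v ∉ τ := by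
    intro τ hτ hvτ
    have h1 := hτ hvτ
    simp only [sigmaB, mem_Icc] at h1
    have h2 : (t + 1) * d ≤ (Q + 1) * d := Nat.mul_le_mul_right d (by omega)
    omega
  rw [Finset.filter_image]
  have hpred : ((sigmaB d t).powerset.filter
      (fun τ => (insert v τ).Nonempty ∧
        ((insert v τ) ∩ Finset.Icc (i * d + 1) ((j + 1) * d)).Nonempty))
      = (sigmaB d t).powerset.filter
        (fun τ => (τ ∩ Finset.Icc (i * d + 1) ((j + 1) * d)).Nonempty) := by
    apply filter_congr
    intro τ hτ
    simp only [mem_powerset] at hτ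
    rw [Finset.insert_inter_of_notMem hvS]
    simp [insert_nonempty]
  rw [hpred]
  have hinj : Set.InjOn (insert v) {s : Finset ℕ | s ⊆ sigmaB d t} := by
    intro s hs u hu hsu
    have hvs : v ∉ s := hvnotin s hs
    have hvu : v ∉ u := hvnotin u hu
    have := congrArg (fun w => Finset.erase w v) hsu
    simpa [Finset.erase_insert hvs, Finset.erase_insert hvu] using this
  rw [card_image_of_injOn (hinj.mono (fun s hs => by
    rw [Finset.mem_coe, mem_filter, mem_powerset] at hs
    exact hs.1))]
  by_cases ht : t ∈ Finset.Icc i j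
  · rw [if_pos ht]
    simp only [mem_Icc] at ht
    have hsub : sigmaB d t ⊆ Finset.Icc (i * d + 1) ((j + 1) * d) := by
      intro x hx
      simp only [sigmaB, mem_Icc] at hx ⊢
      have h1 : i * d ≤ t * d := Nat.mul_le_mul_right d ht.1
      have h2 : (t + 1) * d ≤ (j + 1) * d := Nat.mul_le_mul_right d (by omega)
      omega
    have : (sigmaB d t).powerset.filter
        (fun τ => (τ ∩ Finset.Icc (i * d + 1) ((j + 1) * d)).Nonempty)
        = (sigmaB d t).powerset.filter (fun τ => τ.Nonempty) := by
      apply filter_congr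
      intro τ hτ
      simp only [mem_powerset] at hτ
      rw [Finset.inter_eq_left.mpr (hτ.trans hsub)]
    rw [this]
    have h2 : (sigmaB d t).powerset.filter (fun τ => τ.Nonempty)
        = (sigmaB d t).powerset.erase ∅ := by
      ext σ; simp [Finset.nonempty_iff_ne_empty, and_comm]
    rw [h2, card_erase_of_mem (by simp), card_powerset]
    have : (sigmaB d t).card = d := by
      simp only [sigmaB, Nat.card_Icc]
      have : (t + 1) * d = t * d + d := by ring
      omega
    rw [this]
  · rw [if_neg ht]
    rw [card_eq_zero, filter_eq_empty_iff]
    intro τ hτ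
    simp only [mem_powerset] at hτ
    rintro ⟨x, hx⟩
    rw [mem_inter] at hx
    have h1 := hτ hx.1
    have h2 := hx.2
    simp only [sigmaB, mem_Icc] at h1 h2 ht
    push_neg at ht
    rcases Nat.lt_or_ge t i with h | h
    · have : (t + 1) * d ≤ i * d := Nat.mul_le_mul_right d (by omega)
      omega
    · have : (j + 1) * d ≤ t * d := Nat.mul_le_mul_right d (by omega)
      have := ht h
      omega

lemma eCount_Tr_split (d Q r : ℕ) (S : Finset ℕ) (hrQ : r < Q)
    (hS : ∀ x ∈ S, x ≤ d * (Q + 1)) :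
    eCount (Tr d Q r) S = eCount (T0 d Q) S +
      ∑ k ∈ Finset.range r,
        (((sigmaB d (target Q r k)).powerset.image (insert (rootVtx d Q k))).filter
          (fun σ => σ.Nonempty ∧ (σ ∩ S).Nonempty)).card := by
  classical
  have hmem : ∀ k < r, ∀ σ ∈ (sigmaB d (target Q r k)).powerset.image (insert (rootVtx d Q k)),
      rootVtx d Q k ∈ σ ∧ ∀ x ∈ σ, x ≤ d * (Q + 1) ∨ x = rootVtx d Q k := by
    intro k hk σ hσ
    simp only [mem_image, mem_powerset] at hσ
    obtain ⟨τ, hτ, rfl⟩ := hσ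
    refine ⟨mem_insert_self _ _, ?_⟩
    intro x hx
    rcases mem_insert.mp hx with rfl | hx
    · right; rfl
    · left
      have h1 := hτ hx
      simp only [sigmaB, mem_Icc] at h1
      have h2 : (target Q r k + 1) * d ≤ (Q + 1) * d :=
        Nat.mul_le_mul_right d (by have := target_le Q r k hrQ hk; omega)
      have : (Q + 1) * d = d * (Q + 1) := Nat.mul_comm _ _
      omega
  unfold eCount Tr
  rw [filter_union, card_union_of_disjoint, filter_biUnion, card_biUnion]
  · intro k hk k' hk' hkk'
    simp only [mem_coe, mem_range, Function.onFun] at hk hk' ⊢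
    rw [disjoint_left]
    intro σ h1 h2
    rw [mem_filter] at h1 h2
    obtain ⟨hv1, hall1⟩ := hmem k hk σ h1.1
    obtain ⟨hv2, _⟩ := hmem k' hk' σ h2.1
    rcases hall1 _ hv2 with h | h
    · simp only [rootVtx] at h; omega
    · simp only [rootVtx] at h; omega
  · rw [disjoint_left]
    intro σ h1 h2
    rw [mem_filter] at h1 h2
    have hsub := mem_powerset.mp (mem_filter.mp h1.1).1
    rw [mem_biUnion] at h2
    obtain ⟨⟨k, hk, hσk⟩, -⟩ := h2
    obtain ⟨hv, _⟩ := hmem k (mem_range.mp hk) σ hσk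
    have := hsub hv
    simp only [mem_Icc, rootVtx] at this
    omega

lemma count_targets (Q r i j : ℕ) (hr0 : 0 < r) (hrQ : r < Q) :
    ((Finset.range r).filter (fun k => target Q r k ∈ Finset.Icc i j)).card
      = Lfun Q r i j := by
  classical
  set g : ℕ → ℕ := fun m => (m * Q + r - 1) / r with hg
  have hmono : StrictMono g := by
    apply strictMono_nat_of_lt_succ
    intro m
    have h1 : (m + 1) * Q = m * Q + Q := by ring
    have h2 : m * Q + r - 1 + r ≤ (m + 1) * Q + r - 1 := by omega
    calc g m < g m + 1 := Nat.lt_succ_self _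
      _ = (m * Q + r - 1 + r) / r := (Nat.add_div_right _ hr0).symm
      _ ≤ g (m + 1) := Nat.div_le_div_right h2
  have hstep1 : ((Finset.range r).filter (fun k => target Q r k ∈ Finset.Icc i j)).card
      = ((Finset.Icc 1 r).filter (fun m => g m ∈ Finset.Icc i j)).card := by
    apply Finset.card_bij (fun k _ => k + 1)
    · intro k hk
      simp only [mem_filter, mem_range] at hk
      rw [target_eq Q r k hrQ hk.1] at hk
      rw [mem_filter, mem_Icc]
      refine ⟨⟨by omega, by omega⟩, ?_⟩
      show ((k + 1) * Q + r - 1) / r ∈ Finset.Icc i j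
      exact hk.2
    · intro k hk k' hk' h
      omega
    · intro m hm
      simp only [mem_filter, mem_Icc] at hm
      refine ⟨m - 1, ?_, by omega⟩
      rw [mem_filter, mem_range]
      constructor
      · omega
      · rw [target_eq Q r (m - 1) hrQ (by omega)]
        have h5 : m - 1 + 1 = m := by omega
        rw [h5]
        rw [mem_Icc]
        exact hm.2
  rw [hstep1]
  unfold Lfun
  rw [← hg, Finset.inter_comm, ← Finset.filter_mem_eq_inter, Finset.filter_image,
    card_image_of_injOn (hmono.injective.injOn)]


/-- **Density formula, case `j < Q`.** Let `d, Q ≥ 1` and `0 < r < Q`.  For every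
`1 ≤ i ≤ j < Q`, the set `S = σ_i ∪ σ_{i+1} ∪ … ∪ σ_j` satisfies
`dens_{T_r}(S) = 2^d + ((2^d − 1)·L[i,j] + (d−1)·2^d + 1) / (d(j − i + 1))`. -/
theorem Tr_density_interior (d Q r : ℕ) (hd : 1 ≤ d) (hQ : 1 ≤ Q)
    (hr0 : 0 < r) (hrQ : r < Q) (i j : ℕ) (hi : 1 ≤ i) (hij : i ≤ j) (hjQ : j < Q) :
    dens (Tr d Q r) ((Finset.Icc i j).biUnion (sigmaB d)) =
      2 ^ d + (((2 : ℝ) ^ d - 1) * (Lfun Q r i j : ℝ) + ((d : ℝ) - 1) * 2 ^ d + 1) /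
        ((d : ℝ) * ((j : ℝ) - (i : ℝ) + 1)) := by
  classical
  obtain ⟨a, rfl⟩ : ∃ a, i = a + 1 := ⟨i - 1, by omega⟩
  obtain ⟨b, rfl⟩ : ∃ b, j = a + 1 + b := ⟨j - (a + 1), by omega⟩
  obtain ⟨c, rfl⟩ : ∃ c, Q = a + b + 2 + c := ⟨Q - (a + b + 2), by omega⟩
  have hbU : (Finset.Icc (a + 1) (a + 1 + b)).biUnion (sigmaB d)
      = Finset.Icc ((a + 1) * d + 1) ((a + 1 + b + 1) * d) :=
    biUnion_sigmaB d _ _ hd (by omega)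
  have hcard : (Finset.Icc ((a + 1) * d + 1) ((a + 1 + b + 1) * d)).card = (b + 1) * d := by
    rw [Nat.card_Icc]
    have h : (a + 1 + b + 1) * d = (a + 1) * d + (b + 1) * d := by ring
    omega
  have hpow : 1 ≤ 2 ^ d := Nat.one_le_two_pow
  have hE : eCount (Tr d (a + b + 2 + c) r)
      (Finset.Icc ((a + 1) * d + 1) ((a + 1 + b + 1) * d))
      = (b + 1) * d * 2 ^ d + (2 ^ d - 1) * Lfun (a + b + 2 + c) r (a + 1) (a + 1 + b)
        + (d - 1) * 2 ^ d + 1 := by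
    rw [eCount_Tr_split d (a + b + 2 + c) r _ hrQ (by
      intro x hx
      simp only [mem_Icc] at hx
      have h : d * (a + b + 2 + c + 1) = (a + 1 + b + 1) * d + (c + 1) * d := by ring
      omega)]
    rw [Finset.sum_congr rfl (fun k hk =>
      att_card d (a + b + 2 + c) r (a + 1) (a + 1 + b) k hd hrQ (mem_range.mp hk) (by omega))]
    rw [← Finset.sum_filter, Finset.sum_const, smul_eq_mul,
      count_targets (a + b + 2 + c) r (a + 1) (a + 1 + b) hr0 hrQ]
    have hc1 := cnt_formula d 1 ((a + b + 2 + c) * d) hd le_rfl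
    have harg1 : 1 + d - 1 + (a + b + 2 + c) * d = d * (a + b + 2 + c + 1) := by
      have h : d * (a + b + 2 + c + 1) = (a + b + 2 + c) * d + d := by ring
      omega
    rw [harg1] at hc1
    have hc2 := cnt_formula d 1 (a * d) hd le_rfl
    have harg2 : 1 + d - 1 + a * d = (a + 1) * d := by
      have h : (a + 1) * d = a * d + d := by ring
      omega
    rw [harg2] at hc2
    have hc3 := cnt_formula d ((a + 1 + b + 1) * d + 1) (c * d) hd (by omega)
    have harg3 : (a + 1 + b + 1) * d + 1 + d - 1 + c * d = d * (a + b + 2 + c + 1) := by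
      have h : d * (a + b + 2 + c + 1) = (a + 1 + b + 1) * d + d + c * d := by ring
      omega
    rw [harg3] at hc3
    have hT0 := eT0_card d (a + b + 2 + c) (a + 1) (a + 1 + b) hd (by omega) (by omega)
      (by omega)
    have hkey : (a + b + 2 + c) * d * 2 ^ d
        = a * d * 2 ^ d + c * d * 2 ^ d + (b + 1) * d * 2 ^ d + d * 2 ^ d := by ring
    have hd1 : (d - 1) * 2 ^ d + 2 ^ d = d * 2 ^ d := by
      have h : d - 1 + 1 = d := by omega
      calc (d - 1) * 2 ^ d + 2 ^ d = (d - 1 + 1) * 2 ^ d := by ring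
        _ = d * 2 ^ d := by rw [h]
    have hcomm : Lfun (a + b + 2 + c) r (a + 1) (a + 1 + b) * (2 ^ d - 1)
        = (2 ^ d - 1) * Lfun (a + b + 2 + c) r (a + 1) (a + 1 + b) := Nat.mul_comm _ _
    omega
  unfold dens
  rw [hbU, hE, hcard]
  have hden1 : ((b : ℝ) + 1) * (d : ℝ) ≠ 0 := by positivity
  have hden2 : (d : ℝ) * (((a + 1 + b : ℕ) : ℝ) - ((a + 1 : ℕ) : ℝ) + 1) ≠ 0 := by
    push_cast
    have : ((a : ℝ) + 1 + b) - ((a : ℝ) + 1) + 1 = (b : ℝ) + 1 := by ring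
    rw [this]
    positivity
  have hpow' : (1 : ℝ) ≤ 2 ^ d := one_le_pow₀ (by norm_num)
  push_cast [Nat.cast_sub hpow, Nat.cast_sub hd]
  rw [div_eq_iff (by positivity)]
  field_simp
  ring
end
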